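/- arXiv:2112.03427 — 6 statements merged into one kernel-verified Lean document; each statement's English description precedes it below -/
import Mathlib

section
/- Let n ≥ 1 and let T be a set of transpositions in Equiv.Perm (Fin n). Then the subgroup generated by T is all of Equiv.Perm (Fin n) if and only if the subgroup generated by T acts transitively on Fin n. -/
/-- A set of transpositions in the symmetric group on `Fin n` generates the whole
symmetric group if and only if the subgroup it generates acts transitively on `Fin n`. -/
theorem closure_swaps_eq_top_iff_transitive (n : ℕ) (hn : 1 ≤ n)
    (T : Set (Equiv.Perm (Fin n))) (hT : ∀ t ∈ T, t.IsSwap) :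
    Subgroup.closure T = ⊤ ↔
      ∀ i j : Fin n, ∃ h ∈ Subgroup.closure T, h i = j := by
  constructor
  · intro h i j
    exact ⟨Equiv.swap i j, by simp [h], Equiv.swap_apply_left i j⟩
  · intro htrans
    rw [eq_top_iff, ← Equiv.Perm.closure_isSwap, Subgroup.closure_le]
    rintro σ ⟨x, y, -, rfl⟩
    rw [SetLike.mem_coe, swap_mem_closure_isSwap hT]
    obtain ⟨h, hmem, hxy⟩ := htrans y x
    exact ⟨⟨h, hmem⟩, hxy⟩
end

section
/- Fix integers m ≥ 1 and n ≥ 2 and take p = m, so the group is G(m,m,n). The group G(m,1,n) acts on the set (ℤ/mℤ) × Fin n by [u; a]·(c, j) = (c + a_j, u(j)). Then a set S of reflections of G(m,m,n) generates G(m,m,n) if and only if the subgroup generated by S acts transitively on (ℤ/mℤ) × Fin n. -/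
@[ext]
structure GG (m n : ℕ) where
  perm : Equiv.Perm (Fin n)
  col : Fin n → ZMod m

namespace GG

variable {m n : ℕ}

instance : Mul (GG m n) := ⟨fun g h => ⟨g.perm * h.perm, g.col ∘ ⇑h.perm + h.col⟩⟩
instance : One (GG m n) := ⟨⟨1, 0⟩⟩
instance : Inv (GG m n) := ⟨fun g => ⟨g.perm⁻¹, -(g.col ∘ ⇑g.perm⁻¹)⟩⟩

@[simp] theorem mul_perm (g h : GG m n) : (g * h).perm = g.perm * h.perm := rfl
@[simp] theorem mul_col (g h : GG m n) : (g * h).col = g.col ∘ ⇑h.perm + h.col := rfl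
@[simp] theorem one_perm : (1 : GG m n).perm = 1 := rfl
@[simp] theorem one_col : (1 : GG m n).col = 0 := rfl
@[simp] theorem inv_perm (g : GG m n) : g⁻¹.perm = g.perm⁻¹ := rfl
@[simp] theorem inv_col (g : GG m n) : g⁻¹.col = -(g.col ∘ ⇑g.perm⁻¹) := rfl

instance : Group (GG m n) :=
  Group.ofLeftAxioms
    (fun a b c => by
      refine GG.ext (mul_assoc _ _ _) ?_
      funext i
      simp [Equiv.Perm.mul_apply, add_assoc])
    (fun a => by
      refine GG.ext (one_mul _) ?_
      funext i
      simp)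
    (fun a => by
      refine GG.ext (inv_mul_cancel _) ?_
      funext i
      simp)

/-- The color (weight) of an element of `G(m,1,n)`. -/
def wt (g : GG m n) : ZMod m := ∑ i, g.col i

@[simp] theorem wt_mul (g h : GG m n) : wt (g * h) = wt g + wt h := by
  simp only [wt, mul_col, Pi.add_apply, Function.comp_apply, Finset.sum_add_distrib]
  congr 1
  exact Equiv.sum_comp h.perm g.col

@[simp] theorem wt_one : wt (1 : GG m n) = 0 := by simp [wt]

@[simp] theorem wt_inv (g : GG m n) : wt g⁻¹ = -wt g := by
  simp only [wt, inv_col, Pi.neg_apply, Function.comp_apply, Finset.sum_neg_distrib]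
  congr 1
  exact Equiv.sum_comp g.perm⁻¹ g.col

/-- A transposition-like reflection `[(i j); a]`. -/
def IsTranspositionLike (g : GG m n) : Prop :=
  ∃ i j : Fin n, i ≠ j ∧ g.perm = Equiv.swap i j ∧
    (∀ l, l ≠ i → l ≠ j → g.col l = 0) ∧ g.col i + g.col j = 0

/-- A diagonal reflection of `G(m,p,n)`. -/
def IsDiagonalRefl (p : ℕ) (g : GG m n) : Prop :=
  g.perm = 1 ∧ ∃ i : Fin n, g.col i ≠ 0 ∧ g.col i ∈ AddSubgroup.zmultiples ((p : ZMod m)) ∧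
    ∀ l, l ≠ i → g.col l = 0

/-- A reflection of `G(m,p,n)`. -/
def IsRefl (p : ℕ) (g : GG m n) : Prop := IsTranspositionLike g ∨ IsDiagonalRefl p g

/-- The subgroup of `G(m,1,n)` of elements whose colors all lie in `A` and whose
total color lies in `B`. -/
def Gsub (m n : ℕ) (A B : AddSubgroup (ZMod m)) : Subgroup (GG m n) where
  carrier := {g | (∀ i, g.col i ∈ A) ∧ wt g ∈ B}
  one_mem' := ⟨fun i => by simpa using A.zero_mem, by simpa using B.zero_mem⟩
  mul_mem' := fun {g h} hg hh =>
    ⟨fun i => by simpa using A.add_mem (hg.1 (h.perm i)) (hh.1 i),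
     by rw [wt_mul]; exact B.add_mem hg.2 hh.2⟩
  inv_mem' := fun {g} hg =>
    ⟨fun i => by simpa using A.neg_mem (hg.1 (g.perm⁻¹ i)),
     by rw [wt_inv]; exact B.neg_mem hg.2⟩

/-- The group `G(m,p,n)` as a subgroup of `G(m,1,n)`. -/
def Gmpn (m p n : ℕ) : Subgroup (GG m n) :=
  Gsub m n ⊤ (AddSubgroup.zmultiples ((p : ZMod m)))

/-- The projection `π_{m/r} : G(m,1,n) → G(r,1,n)`. -/
def pimap (r : ℕ) (h : r ∣ m) (g : GG m n) : GG r n :=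
  ⟨g.perm, fun i => ZMod.castHom h (ZMod r) (g.col i)⟩

/-- The color of the cycle of `g` through the point `y`. -/
def cycleColor (g : GG m n) (y : Fin n) : ZMod m :=
  ∑ x ∈ insert y (g.perm.cycleOf y).support, g.col x

/-- The number of full reflection factorizations of `g` in `G(m,p,n)` of length `N`. -/
noncomputable def fullCount (p : ℕ) (g : GG m n) (N : ℕ) : ℕ :=
  Nat.card {t : Fin N → GG m n // (∀ i, IsRefl p (t i)) ∧ (List.ofFn t).prod = g ∧
    Subgroup.closure (Set.range t) = Gmpn m p n}

/-- The number of full reflection factorizations of `c` of length `N` in the cyclic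
group `G(m,p,1) ≅ pℤ/mℤ`. -/
noncomputable def cycCount (p : ℕ) (c : ZMod m) (N : ℕ) : ℕ :=
  Nat.card {x : Fin N → ZMod m // (∀ i, x i ≠ 0 ∧ x i ∈ AddSubgroup.zmultiples ((p : ZMod m))) ∧
    ∑ i, x i = c ∧ AddSubgroup.closure (Set.range x) = AddSubgroup.zmultiples ((p : ZMod m))}

end GG

/-- The number of transitive transposition factorizations of `σ` of length `N`. -/
noncomputable def transCount (n : ℕ) (σ : Equiv.Perm (Fin n)) (N : ℕ) : ℕ :=
  Nat.card {t : Fin N → Equiv.Perm (Fin n) // (∀ i, (t i).IsSwap) ∧ (List.ofFn t).prod = σ ∧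
    ∀ x y : Fin n, ∃ h ∈ Subgroup.closure (Set.range t), h x = y}

section Aux

open GG

variable {m n : ℕ}

/-- Diagonal embedding of colors into `G(m,1,n)`. -/
def dembed (a : Fin n → ZMod m) : GG m n := ⟨1, a⟩

@[simp] lemma dembed_perm (a : Fin n → ZMod m) : (dembed a).perm = 1 := rfl
@[simp] lemma dembed_col (a : Fin n → ZMod m) : (dembed a).col = a := rfl

lemma dembed_zero : dembed (0 : Fin n → ZMod m) = 1 := rfl

lemma dembed_mul (a b : Fin n → ZMod m) : dembed a * dembed b = dembed (a + b) := by
  refine GG.ext (one_mul 1) ?_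
  funext j
  simp

/-- A "diagonal" element with value `c` at `x` and `-c` at `y`. -/
def dgl (x y : Fin n) (c : ZMod m) : GG m n := dembed (Pi.single x c - Pi.single y c)

/-- A reflection-like element: swap `x y` with color `c` at `x`, `-c` at `y`. -/
def rfl' (x y : Fin n) (c : ZMod m) : GG m n :=
  ⟨Equiv.swap x y, Pi.single x c - Pi.single y c⟩

lemma conj_dembed (h : GG m n) (a : Fin n → ZMod m) :
    h * dembed a * h⁻¹ = dembed (a ∘ ⇑(h.perm⁻¹)) := by
  refine GG.ext (by simp) ?_
  funext j
  simp [Function.comp_apply]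

lemma single_comp (u : Equiv.Perm (Fin n)) (x : Fin n) (c : ZMod m) :
    (Pi.single x c : Fin n → ZMod m) ∘ ⇑(u⁻¹) = Pi.single (u x) c := by
  funext j
  simp only [Function.comp_apply, Pi.single_apply]
  by_cases h : j = u x
  · subst h; simp
  · rw [if_neg h, if_neg]
    intro hx
    exact h (Equiv.Perm.inv_eq_iff_eq.mp hx)

lemma conj_dgl (h : GG m n) (x y : Fin n) (c : ZMod m) :
    h * dgl x y c * h⁻¹ = dgl (h.perm x) (h.perm y) c := by
  rw [dgl, conj_dembed, dgl]
  congr 1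
  have : (Pi.single x c - Pi.single y c : Fin n → ZMod m) ∘ ⇑(h.perm⁻¹)
      = (Pi.single x c) ∘ ⇑(h.perm⁻¹) - (Pi.single y c) ∘ ⇑(h.perm⁻¹) := rfl
  rw [this, single_comp, single_comp]

lemma exists_perm_pair {x y x' y' : Fin n} (hxy : x ≠ y) (hxy' : x' ≠ y') :
    ∃ u : Equiv.Perm (Fin n), u x = x' ∧ u y = y' := by
  classical
  set σ := Equiv.swap x x' with hσ
  have hσx : σ x = x' := Equiv.swap_apply_left x x'
  have h1 : σ y ≠ x' := by
    intro h
    exact hxy (σ.injective (hσx.trans h.symm))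
  refine ⟨Equiv.swap (σ y) y' * σ, ?_, ?_⟩
  · rw [Equiv.Perm.mul_apply, hσx]
    exact Equiv.swap_apply_of_ne_of_ne (Ne.symm h1) hxy'
  · rw [Equiv.Perm.mul_apply]
    exact Equiv.swap_apply_left _ _

/-- `c` is a "diagonal color" for `H`. -/
def InC (H : Subgroup (GG m n)) (c : ZMod m) : Prop :=
  ∀ x y : Fin n, x ≠ y → dgl x y c ∈ H

lemma InC_zero (H : Subgroup (GG m n)) : InC H (0 : ZMod m) := by
  intro x y _
  have : dgl x y (0 : ZMod m) = 1 := by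
    rw [dgl, Pi.single_zero, Pi.single_zero, sub_zero, dembed_zero]
  rw [this]
  exact one_mem H

lemma mem_InC_of_dgl (H : Subgroup (GG m n))
    (hpi : ∀ u : Equiv.Perm (Fin n), ∃ h ∈ H, h.perm = u)
    {x y : Fin n} {c : ZMod m} (hxy : x ≠ y) (hd : dgl x y c ∈ H) :
    InC H c := by
  intro x' y' hxy'
  obtain ⟨u, hux, huy⟩ := exists_perm_pair hxy hxy'
  obtain ⟨h, hH, hup⟩ := hpi u
  have hmem := mul_mem (mul_mem hH hd) (inv_mem hH)
  rwa [conj_dgl, hup, hux, huy] at hmem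

lemma tl_fix {s : GG m n} (hs : GG.IsTranspositionLike s) {y : Fin n}
    (h : s.perm y = y) : s.col y = 0 := by
  obtain ⟨i, j, hij, hperm, hsupp, hsum⟩ := hs
  rw [hperm] at h
  have hyi : y ≠ i := by
    rintro rfl
    rw [Equiv.swap_apply_left] at h
    exact hij h.symm
  have hyj : y ≠ j := by
    rintro rfl
    rw [Equiv.swap_apply_right] at h
    exact hij h
  exact hsupp y hyi hyj

lemma tl_move {s : GG m n} (hs : GG.IsTranspositionLike s) {y : Fin n}
    (h : s.perm y ≠ y) :
    s.perm = Equiv.swap y (s.perm y) ∧ s.col y + s.col (s.perm y) = 0 ∧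
      ∀ w, w ≠ y → w ≠ s.perm y → s.col w = 0 := by
  obtain ⟨i, j, hij, hperm, hsupp, hsum⟩ := hs
  rw [hperm] at h ⊢
  rcases Equiv.swap_apply_ne_self_iff.mp h with ⟨-, rfl | rfl⟩
  · rw [Equiv.swap_apply_left]
    exact ⟨rfl, hsum, hsupp⟩
  · rw [Equiv.swap_apply_right]
    exact ⟨Equiv.swap_comm _ _, by rw [add_comm]; exact hsum,
      fun w hwj hwi => hsupp w hwi hwj⟩

lemma tl_sq {s : GG m n} (hs : GG.IsTranspositionLike s) : s * s = 1 := by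
  obtain ⟨i, j, hij, hperm, hsupp, hsum⟩ := hs
  refine GG.ext ?_ ?_
  · rw [GG.mul_perm, hperm, Equiv.swap_mul_self, GG.one_perm]
  · funext w
    rw [GG.mul_col]
    simp only [Pi.add_apply, Function.comp_apply, GG.one_col, Pi.zero_apply, hperm]
    rcases eq_or_ne w i with rfl | hwi
    · rw [Equiv.swap_apply_left]
      rw [add_comm]; exact hsum
    rcases eq_or_ne w j with rfl | hwj
    · rw [Equiv.swap_apply_right]
      exact hsum
    · rw [Equiv.swap_apply_of_ne_of_ne hwi hwj, hsupp w hwi hwj, add_zero]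

lemma tl_inv {s : GG m n} (hs : GG.IsTranspositionLike s) : s⁻¹ = s :=
  inv_eq_of_mul_eq_one_right (tl_sq hs)

lemma tl_wt {s : GG m n} (hs : GG.IsTranspositionLike s) : GG.wt s = 0 := by
  obtain ⟨i, j, hij, hperm, hsupp, hsum⟩ := hs
  rw [GG.wt, ← Finset.sum_subset (Finset.subset_univ {i, j})
    (fun l _ hl => by
      simp only [Finset.mem_insert, Finset.mem_singleton, not_or] at hl
      exact hsupp l hl.1 hl.2)]
  rw [Finset.sum_pair hij]
  exact hsum

lemma wt_single_sub (x y : Fin n) (c : ZMod m) :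
    ∑ i, (Pi.single x c - Pi.single y c : Fin n → ZMod m) i = 0 := by
  simp [Pi.single_apply, Finset.sum_sub_distrib]

lemma mem_Gmpn_iff {g : GG m n} : g ∈ GG.Gmpn m m n ↔ GG.wt g = 0 := by
  have h0 : ((m : ZMod m)) = 0 := ZMod.natCast_self m
  constructor
  · rintro ⟨-, k, hk⟩
    simp only [h0, smul_zero] at hk
    exact hk.symm
  · intro h
    exact ⟨fun i => trivial, ⟨0, by simp [h0, h]⟩⟩

end Aux

section Aux2

open GG

variable {m n : ℕ}

@[simp] lemma rfl'_perm (x y : Fin n) (c : ZMod m) :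
    (rfl' x y c).perm = Equiv.swap x y := rfl
@[simp] lemma rfl'_col (x y : Fin n) (c : ZMod m) :
    (rfl' x y c).col = Pi.single x c - Pi.single y c := rfl
@[simp] lemma dgl_perm (x y : Fin n) (c : ZMod m) : (dgl x y c).perm = 1 := rfl
@[simp] lemma dgl_col (x y : Fin n) (c : ZMod m) :
    (dgl x y c).col = Pi.single x c - Pi.single y c := rfl

lemma walk_lemma (H : Subgroup (GG m n))
    (hpi : ∀ u : Equiv.Perm (Fin n), ∃ h ∈ H, h.perm = u)
    (l : List (GG m n)) (hl : ∀ s ∈ l, s ∈ H ∧ GG.IsTranspositionLike s) (x : Fin n) :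
    (l.prod.perm x = x → InC H (l.prod.col x)) ∧
    (l.prod.perm x ≠ x → rfl' x (l.prod.perm x) (l.prod.col x) ∈ H) := by
  induction l with
  | nil =>
    refine ⟨fun _ => ?_, fun h => absurd rfl h⟩
    simpa using InC_zero H
  | cons s l ih =>
    obtain ⟨hsH, hst⟩ := hl s List.mem_cons_self
    obtain ⟨ihA, ihB⟩ := ih (fun t ht => hl t (List.mem_cons_of_mem s ht))
    have hperm : ((s :: l).prod).perm x = s.perm (l.prod.perm x) := by
      rw [List.prod_cons, GG.mul_perm, Equiv.Perm.mul_apply]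
    have hcol : ((s :: l).prod).col x = s.col (l.prod.perm x) + l.prod.col x := by
      rw [List.prod_cons, GG.mul_col]
      rfl
    rw [hperm, hcol]
    by_cases hy : l.prod.perm x = x
    · rw [hy]
      by_cases hsx : s.perm x = x
      · rw [hsx, tl_fix hst hsx, zero_add]
        exact ⟨fun _ => ihA hy, fun h => absurd rfl h⟩
      · obtain ⟨hsp, hssum, hssupp⟩ := tl_move hst hsx
        refine ⟨fun h => absurd h hsx, fun _ => ?_⟩
        have hxz : x ≠ s.perm x := fun h => hsx h.symm
        have key : rfl' x (s.perm x) (s.col x + l.prod.col x)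
            = s * dgl x (s.perm x) (l.prod.col x) := by
          refine GG.ext ?_ ?_
          · rw [GG.mul_perm, rfl'_perm, dgl_perm, mul_one]
            exact hsp.symm
          · funext w
            rw [rfl'_col, GG.mul_col, dgl_perm, dgl_col]
            simp only [Pi.add_apply, Pi.sub_apply, Function.comp_apply,
              Equiv.Perm.coe_one, id_eq, Pi.single_apply]
            have hcz : s.col (s.perm x) = -(s.col x) := by linear_combination hssum
            rcases eq_or_ne w x with rfl | hwx
            · split_ifs <;> first | ring1 | contradiction
            rcases eq_or_ne w (s.perm x) with rfl | hwz
            · rw [hcz]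
              split_ifs <;> first | ring1 | contradiction
            · rw [hssupp w hwx hwz]
              split_ifs <;> first | ring1 | contradiction
        rw [key]
        exact mul_mem hsH (ihA hy x (s.perm x) hxz)
    · have hr : rfl' x (l.prod.perm x) (l.prod.col x) ∈ H := ihB hy
      set y := l.prod.perm x with hydef
      set c := l.prod.col x with hcdef
      have hxy : x ≠ y := fun h => hy h.symm
      by_cases hsy : s.perm y = y
      · rw [hsy, tl_fix hst hsy, zero_add]
        exact ⟨fun h => absurd h hy, fun _ => hr⟩
      · obtain ⟨hsp, hssum, hssupp⟩ := tl_move hst hsy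
        have hcz : s.col (s.perm y) = -(s.col y) := by linear_combination hssum
        by_cases hzx : s.perm y = x
        · rw [hzx]
          refine ⟨fun _ => ?_, fun h => absurd rfl h⟩
          have key : dgl x y (s.col y + c) = s * rfl' x y c := by
            refine GG.ext ?_ ?_
            · rw [GG.mul_perm, dgl_perm, rfl'_perm, hsp, hzx, Equiv.swap_comm,
                Equiv.swap_mul_self]
            · funext w
              rw [dgl_col, GG.mul_col, rfl'_perm, rfl'_col]
              simp only [Pi.add_apply, Pi.sub_apply, Function.comp_apply,
                Pi.single_apply]
              have hsx0 : s.col x = -(s.col y) := by rw [← hzx]; exact hcz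
              rcases eq_or_ne w x with rfl | hwx
              · rw [Equiv.swap_apply_left]
                split_ifs <;> first | ring1 | contradiction
              rcases eq_or_ne w y with rfl | hwy
              · rw [Equiv.swap_apply_right, hsx0]
                split_ifs <;> first | ring1 | contradiction
              · rw [Equiv.swap_apply_of_ne_of_ne hwx hwy,
                  hssupp w hwy (by rw [hzx]; exact hwx)]
                split_ifs <;> first | ring1 | contradiction
          exact mem_InC_of_dgl H hpi hxy (key ▸ mul_mem hsH hr)
        · refine ⟨fun h => absurd h hzx, fun _ => ?_⟩
          have hxz : x ≠ s.perm y := fun h => hzx h.symm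
          have hyz : y ≠ s.perm y := fun h => hsy h.symm
          have hspx : s.perm x = x := by
            conv_lhs => rw [hsp]
            exact Equiv.swap_apply_of_ne_of_ne hxy hxz
          have key : rfl' x (s.perm y) (s.col y + c) = s * rfl' x y c * s⁻¹ := by
            refine GG.ext ?_ ?_
            · rw [GG.mul_perm, GG.mul_perm, GG.inv_perm, rfl'_perm, rfl'_perm,
                ← Equiv.swap_apply_apply s.perm x y, hspx]
            · funext w
              rw [rfl'_col, GG.mul_col, GG.mul_col, GG.inv_col, GG.inv_perm]
              simp only [rfl'_perm, rfl'_col, Pi.add_apply, Pi.sub_apply,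
                Function.comp_apply, Pi.neg_apply, Pi.single_apply]
              have hsinv : ∀ v, s.perm⁻¹ v = Equiv.swap y (s.perm y) v := by
                intro v
                conv_lhs => rw [hsp]
                rw [Equiv.swap_inv]
              rw [hsinv w]
              have hscx : s.col x = 0 := hssupp x hxy hxz
              rcases eq_or_ne w x with rfl | hwx
              · rw [Equiv.swap_apply_of_ne_of_ne hxy hxz, Equiv.swap_apply_left,
                  hscx]
                split_ifs <;> first | ring1 | contradiction
              rcases eq_or_ne w (s.perm y) with rfl | hwz
              · rw [Equiv.swap_apply_right, Equiv.swap_apply_right, hscx]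
                split_ifs <;> first | ring1 | contradiction
              rcases eq_or_ne w y with rfl | hwy
              · rw [Equiv.swap_apply_left,
                  Equiv.swap_apply_of_ne_of_ne (Ne.symm hxz) (Ne.symm hyz)]
                split_ifs <;> first | ring1 | contradiction
              · rw [Equiv.swap_apply_of_ne_of_ne hwy hwz,
                  Equiv.swap_apply_of_ne_of_ne hwx hwy]
                split_ifs <;> first | ring1 | contradiction
          rw [key]
          exact mul_mem (mul_mem hsH hr) (inv_mem hsH)

lemma dembed_sum_mem (H : Subgroup (GG m n)) (t : Finset (Fin n))
    (f : Fin n → (Fin n → ZMod m)) (h : ∀ i ∈ t, dembed (f i) ∈ H) :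
    dembed (∑ i ∈ t, f i) ∈ H := by
  classical
  induction t using Finset.induction with
  | empty => rw [Finset.sum_empty, dembed_zero]; exact one_mem H
  | insert _ _ hx ih =>
    rw [Finset.sum_insert hx, ← dembed_mul]
    exact mul_mem (h _ (Finset.mem_insert_self _ _))
      (ih fun i hi => h i (Finset.mem_insert_of_mem hi))

lemma diag_mem (H : Subgroup (GG m n)) (hn : 2 ≤ n) (hC : ∀ c : ZMod m, InC H c)
    (a : Fin n → ZMod m) (ha : ∑ i, a i = 0) : dembed a ∈ H := by
  classical
  have hn0 : 0 < n := by omega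
  set x0 : Fin n := ⟨0, hn0⟩ with hx0
  have herase : ∑ i ∈ Finset.univ.erase x0, a i = -(a x0) := by
    have h1 := Finset.sum_erase_add Finset.univ a (Finset.mem_univ x0)
    rw [ha] at h1
    linear_combination h1
  have key : a = ∑ i ∈ Finset.univ.erase x0,
      (Pi.single i (a i) - Pi.single x0 (a i)) := by
    funext j
    rw [Finset.sum_apply]
    simp only [Pi.sub_apply, Pi.single_apply]
    rw [Finset.sum_sub_distrib]
    rcases eq_or_ne j x0 with rfl | hj
    · rw [Finset.sum_ite_eq (Finset.univ.erase x0) x0 a,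
        if_neg (fun h => (Finset.mem_erase.mp h).1 rfl)]
      simp only [eq_self_iff_true, if_true]
      rw [herase]
      ring
    · rw [Finset.sum_ite_eq (Finset.univ.erase x0) j a,
        if_pos (Finset.mem_erase.mpr ⟨hj, Finset.mem_univ j⟩)]
      simp [hj]
  rw [key]
  refine dembed_sum_mem H _ _ fun i hi => ?_
  exact hC (a i) i x0 (Finset.mem_erase.mp hi).1

end Aux2

/-- Projection to the permutation part, as a group hom. -/
def permHom {m n : ℕ} : GG m n →* Equiv.Perm (Fin n) :=
  MonoidHom.mk' (fun g => g.perm) (fun _ _ => rfl)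

/-- A set `S` of reflections of `G(m,m,n)` generates `G(m,m,n)` if and only if the
subgroup it generates acts transitively on `(ℤ/mℤ) × Fin n`, where `G(m,1,n)` acts by
`[u; a]·(c, j) = (c + a_j, u(j))`. -/
theorem closure_eq_Gmmn_iff_transitive (m n : ℕ) (hm : 1 ≤ m) (hn : 2 ≤ n)
    (S : Set (GG m n)) (hS : ∀ s ∈ S, GG.IsRefl m s) :
    Subgroup.closure S = GG.Gmpn m m n ↔
      ∀ x y : ZMod m × Fin n,
        ∃ g ∈ Subgroup.closure S, (x.1 + g.col x.2, g.perm x.2) = y := by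
  classical
  have hn0 : 0 < n := by omega
  constructor
  · -- forward: the full group acts transitively
    rintro hcl ⟨c, i⟩ ⟨c', j⟩
    rcases eq_or_ne i j with rfl | hij
    · obtain ⟨k, hk⟩ := Fintype.exists_ne_of_one_lt_card (by simpa using by omega : 1 < Fintype.card (Fin n)) i
      refine ⟨dgl i k (c' - c), ?_, ?_⟩
      · rw [hcl]
        refine mem_Gmpn_iff.mpr ?_
        simpa [GG.wt] using wt_single_sub i k (c' - c)
      · have h1 : (dgl i k (c' - c)).col i = c' - c := by
          rw [dgl_col]
          simp [Pi.single_apply, Ne.symm hk]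
        have h2 : (dgl i k (c' - c)).perm i = i := rfl
        rw [h1, h2]
        simp
    · refine ⟨rfl' i j (c' - c), ?_, ?_⟩
      · rw [hcl]
        refine mem_Gmpn_iff.mpr ?_
        simpa [GG.wt] using wt_single_sub i j (c' - c)
      · have h1 : (rfl' i j (c' - c)).col i = c' - c := by
          rw [rfl'_col]
          simp [Pi.single_apply, hij]
        have h2 : (rfl' i j (c' - c)).perm i = j := by
          rw [rfl'_perm]
          exact Equiv.swap_apply_left i j
        rw [h1, h2]
        simp
  · -- backward
    intro htr
    have hS' : ∀ s ∈ S, GG.IsTranspositionLike s := by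
      intro s hs
      rcases hS s hs with h | h
      · exact h
      · exfalso
        obtain ⟨-, i, hne, hmem, -⟩ := h
        obtain ⟨k, hk⟩ := hmem
        apply hne
        rw [← hk]
        simp [ZMod.natCast_self]
    set H := Subgroup.closure S with hH
    have hle : H ≤ GG.Gmpn m m n := by
      rw [hH, Subgroup.closure_le]
      intro s hs
      exact mem_Gmpn_iff.mpr (tl_wt (hS' s hs))
    have hlist : ∀ g ∈ H, ∃ l : List (GG m n),
        (∀ s ∈ l, s ∈ H ∧ GG.IsTranspositionLike s) ∧ l.prod = g := by
      intro g hg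
      have hg' : g ∈ Submonoid.closure (S ∪ S⁻¹) := by
        rw [← Subgroup.closure_toSubmonoid]
        exact hg
      obtain ⟨l, hl, hprod⟩ := Submonoid.exists_list_of_mem_closure hg'
      refine ⟨l, fun s hs => ?_, hprod⟩
      rcases hl s hs with h | h
      · exact ⟨Subgroup.subset_closure h, hS' s h⟩
      · have h2 : s⁻¹ ∈ S := Set.mem_inv.mp h
        have h3 := hS' _ h2
        have h4 : s = s⁻¹ := by
          conv_lhs => rw [← inv_inv s, tl_inv h3]
        rw [h4]
        exact ⟨Subgroup.subset_closure h2, h3⟩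
    -- the permutation parts generate the full symmetric group
    have hswapS : ∀ f ∈ (⇑(permHom (m := m) (n := n)) '' S), f.IsSwap := by
      rintro f ⟨s, hs, rfl⟩
      obtain ⟨i, j, hij, hperm, -, -⟩ := hS' s hs
      exact ⟨i, j, hij, hperm⟩
    have horb : ∀ i j : Fin n,
        i ∈ MulAction.orbit (Subgroup.closure (⇑(permHom (m := m) (n := n)) '' S)) j := by
      intro i j
      obtain ⟨g, hg, hgij⟩ := htr (0, j) (0, i)
      have hmem : permHom g ∈ Subgroup.closure (⇑(permHom (m := m) (n := n)) '' S) := by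
        rw [← MonoidHom.map_closure]
        exact ⟨g, hg, rfl⟩
      exact ⟨⟨permHom g, hmem⟩, congrArg Prod.snd hgij⟩
    have htop : Subgroup.closure (⇑(permHom (m := m) (n := n)) '' S) = ⊤ := by
      rw [eq_top_iff, ← Equiv.Perm.closure_isSwap, Subgroup.closure_le]
      rintro f ⟨i, j, hij, rfl⟩
      exact swap_mem_closure_isSwap hswapS |>.mpr (horb i j)
    have hpi : ∀ u : Equiv.Perm (Fin n), ∃ h ∈ H, h.perm = u := by
      intro u
      have : u ∈ Subgroup.map permHom H := by
        rw [hH, MonoidHom.map_closure, htop]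
        trivial
      obtain ⟨h, hh, hhu⟩ := this
      exact ⟨h, hh, hhu⟩
    have hC : ∀ c : ZMod m, InC H c := by
      intro c
      obtain ⟨g, hg, hgc⟩ := htr (0, (⟨0, hn0⟩ : Fin n)) (c, (⟨0, hn0⟩ : Fin n))
      have h1 : g.perm ⟨0, hn0⟩ = ⟨0, hn0⟩ := congrArg Prod.snd hgc
      have h2 : g.col ⟨0, hn0⟩ = c := by
        have := congrArg Prod.fst hgc
        simpa using this
      obtain ⟨l, hl, hprod⟩ := hlist g hg
      have hw := (walk_lemma H hpi l hl ⟨0, hn0⟩).1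
      rw [hprod] at hw
      have := hw h1
      rwa [h2] at this
    have hge : GG.Gmpn m m n ≤ H := by
      intro g hg
      obtain ⟨h, hh, hhp⟩ := hpi g.perm
      have hwg : GG.wt g = 0 := mem_Gmpn_iff.mp hg
      have hwh : GG.wt h = 0 := mem_Gmpn_iff.mp (hle hh)
      have hsum : ∑ i, (g * h⁻¹).col i = 0 := by
        have hw : GG.wt (g * h⁻¹) = 0 := by
          rw [GG.wt_mul, GG.wt_inv, hwg, hwh]
          ring
        simpa [GG.wt] using hw
      have hdiag : dembed ((g * h⁻¹).col) = g * h⁻¹ := by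
        refine GG.ext ?_ rfl
        rw [dembed_perm, GG.mul_perm, GG.inv_perm, hhp, mul_inv_cancel]
      have hmem : g * h⁻¹ ∈ H := by
        rw [← hdiag]
        exact diag_mem H hn hC _ hsum
      have := mul_mem hmem hh
      rwa [inv_mul_cancel_right] at this
    exact le_antisymm hle hge
end

section
/- Let S be a set of reflections of G(m,p,n). Then S generates G(m,p,n) if and only if both of the following hold: the set wt(S) = {wt(s) : s ∈ S} generates the subgroup pℤ/mℤ of ℤ/mℤ, and the set π_{m/p}(S) generates G(p,p,n). -/
namespace GGAux

open GG AddSubgroup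

variable {m n : ℕ}

/-- `pimap` as a monoid hom. -/
def pihom (r : ℕ) (h : r ∣ m) : GG m n →* GG r n where
  toFun := GG.pimap r h
  map_one' := by
    refine GG.ext rfl ?_
    funext i
    simp [GG.pimap]
  map_mul' g k := by
    refine GG.ext rfl ?_
    funext i
    exact map_add (ZMod.castHom h (ZMod r)) _ _

@[simp] theorem pihom_perm (r : ℕ) (h : r ∣ m) (g : GG m n) :
    (pihom r h g).perm = g.perm := rfl

@[simp] theorem pihom_col (r : ℕ) (h : r ∣ m) (g : GG m n) (i : Fin n) :
    (pihom r h g).col i = ZMod.castHom h (ZMod r) (g.col i) := rfl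

theorem wt_pihom (r : ℕ) (h : r ∣ m) (g : GG m n) :
    GG.wt (pihom r h g) = ZMod.castHom h (ZMod r) (GG.wt g) := by
  simp [GG.wt, map_sum]

theorem mem_zmult_iff {m p : ℕ} (hm : 0 < m) (hp : 0 < p) (hpm : p ∣ m) (x : ZMod m) :
    x ∈ zmultiples ((p : ZMod m)) ↔ ZMod.castHom hpm (ZMod p) x = 0 := by
  haveI : NeZero m := ⟨hm.ne'⟩
  haveI : NeZero p := ⟨hp.ne'⟩
  constructor
  · rintro ⟨k, rfl⟩
    simp only [zsmul_eq_mul, map_mul, map_intCast, map_natCast, ZMod.natCast_self,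
      mul_zero]
  · intro hx
    have hxval : x = ((x.val : ℕ) : ZMod m) := by
      rw [ZMod.natCast_val, ZMod.cast_id]
    have : ((x.val : ℕ) : ZMod p) = 0 := by
      rw [← map_natCast (ZMod.castHom hpm (ZMod p)), ← hxval, hx]
    obtain ⟨t, ht⟩ := (ZMod.natCast_eq_zero_iff _ _).mp this
    refine ⟨(t : ℤ), ?_⟩
    rw [hxval, ht]
    show (t : ℤ) • ((p : ℕ) : ZMod m) = ((p * t : ℕ) : ZMod m)
    rw [zsmul_eq_mul, Int.cast_natCast]
    push_cast
    ring

theorem mem_Gmpn {p : ℕ} {g : GG m n} :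
    g ∈ GG.Gmpn m p n ↔ GG.wt g ∈ zmultiples ((p : ZMod m)) :=
  ⟨fun h => h.2, fun h => ⟨fun _ => AddSubgroup.mem_top _, h⟩⟩

theorem wt_of_transpositionLike {g : GG m n} (hg : GG.IsTranspositionLike g) :
    GG.wt g = 0 := by
  obtain ⟨i, j, hij, hperm, hzero, hsum⟩ := hg
  rw [GG.wt, ← Finset.sum_subset (Finset.subset_univ ({i, j} : Finset (Fin n)))
    (fun x _ hx => by
      simp only [Finset.mem_insert, Finset.mem_singleton, not_or] at hx
      exact hzero x hx.1 hx.2),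
    Finset.sum_pair hij]
  exact hsum

theorem wt_of_diag {g : GG m n} {i : Fin n} (hzero : ∀ l, l ≠ i → g.col l = 0) :
    GG.wt g = g.col i := by
  rw [GG.wt, ← Finset.sum_subset (Finset.subset_univ ({i} : Finset (Fin n)))
    (fun x _ hx => hzero x (by simpa using hx)), Finset.sum_singleton]

theorem castHom_lift {m p : ℕ} [NeZero m] [NeZero p] (hpm : p ∣ m) (x : ZMod p) :
    ZMod.castHom hpm (ZMod p) ((x.val : ZMod m)) = x := by
  rw [map_natCast, ZMod.natCast_val, ZMod.cast_id]

theorem map_pihom_Gmpn {p : ℕ} (hm : 0 < m) (hp : 0 < p) (hpm : p ∣ m) :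
    Subgroup.map (pihom (n := n) p hpm) (GG.Gmpn m p n) = GG.Gmpn p p n := by
  haveI : NeZero m := ⟨hm.ne'⟩
  haveI : NeZero p := ⟨hp.ne'⟩
  apply le_antisymm
  · rintro _ ⟨g, hg, rfl⟩
    refine mem_Gmpn.mpr ?_
    rw [wt_pihom, (mem_zmult_iff hm hp hpm _).mp (mem_Gmpn.mp hg)]
    exact zero_mem _
  · intro k hk
    refine ⟨⟨k.perm, fun i => (((k.col i).val : ℕ) : ZMod m)⟩, ?_, ?_⟩
    · refine mem_Gmpn.mpr ((mem_zmult_iff hm hp hpm _).mpr ?_)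
      have hw : GG.wt k = 0 := by
        obtain ⟨z, hz⟩ := mem_Gmpn.mp hk
        rw [← hz]
        show z • ((p : ZMod p)) = 0
        rw [ZMod.natCast_self, smul_zero]
      calc ZMod.castHom hpm (ZMod p)
            (GG.wt ⟨k.perm, fun i => (((k.col i).val : ℕ) : ZMod m)⟩)
          = ∑ i, ZMod.castHom hpm (ZMod p) (((k.col i).val : ℕ) : ZMod m) := by
            rw [GG.wt, map_sum]
        _ = GG.wt k := by
            rw [GG.wt]
            exact Finset.sum_congr rfl fun i _ => castHom_lift hpm _
        _ = 0 := hw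
    · refine GG.ext rfl ?_
      funext i
      exact castHom_lift hpm _

theorem refl_mem {p : ℕ} {g : GG m n} (hg : GG.IsRefl p g) : g ∈ GG.Gmpn m p n := by
  rcases hg with htl | ⟨hperm, i, hi0, hip, hzero⟩
  · refine mem_Gmpn.mpr ?_
    rw [wt_of_transpositionLike htl]
    exact zero_mem _
  · refine mem_Gmpn.mpr ?_
    rw [wt_of_diag hzero]
    exact hip

/-- The diagonal element with color `c` at coordinate `i`. -/
def dg (i : Fin n) (c : ZMod m) : GG m n := ⟨1, Pi.single i c⟩

@[simp] theorem dg_perm (i : Fin n) (c : ZMod m) : (dg i c).perm = 1 := rfl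
@[simp] theorem dg_col (i : Fin n) (c : ZMod m) : (dg i c).col = Pi.single i c := rfl

theorem dg_mul (i : Fin n) (c d : ZMod m) : dg i c * dg i d = dg i (c + d) := by
  refine GG.ext (one_mul 1) ?_
  funext l
  simp only [mul_col, dg_col, dg_perm, Equiv.Perm.coe_one, Function.comp_id, Pi.add_apply]
  simp [Pi.single_add]

theorem dg_zero (i : Fin n) : dg i (0 : ZMod m) = 1 := by
  refine GG.ext rfl ?_
  funext l
  simp [dg]

theorem dg_inv (i : Fin n) (c : ZMod m) : (dg i c)⁻¹ = dg i (-c) := by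
  refine GG.ext (by simp) ?_
  funext l
  simp only [inv_col, dg_col, dg_perm, inv_one, Equiv.Perm.coe_one, Function.comp_id,
    Pi.neg_apply]
  simp [Pi.single_neg]

theorem wt_dg (i : Fin n) (c : ZMod m) : GG.wt (dg i c) = c := by
  simp [GG.wt, dg, Finset.sum_pi_single']

theorem conj_dg (h : GG m n) (i : Fin n) (c : ZMod m) :
    h * dg i c * h⁻¹ = dg (h.perm i) c := by
  refine GG.ext (by simp) ?_
  funext l
  simp only [mul_col, dg_col, dg_perm, inv_col, inv_perm, Pi.add_apply, Function.comp_apply,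
    Pi.neg_apply, Equiv.Perm.coe_one, id_eq]
  have key : (Pi.single i c : Fin n → ZMod m) (h.perm⁻¹ l) =
      (Pi.single (h.perm i) c : Fin n → ZMod m) l := by
    rcases eq_or_ne l (h.perm i) with rfl | hl
    · rw [Pi.single_eq_same, ← Equiv.Perm.mul_apply, inv_mul_cancel, Equiv.Perm.one_apply, Pi.single_eq_same]
    · rw [Pi.single_eq_of_ne hl, Pi.single_eq_of_ne]
      intro hcon
      exact hl (by rw [← hcon, ← Equiv.Perm.mul_apply, mul_inv_cancel, Equiv.Perm.one_apply])
  rw [key]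
  ring

theorem diag_eq (a : Fin n → ZMod m) (u : Equiv.Perm (Fin n)) (hu : u = 1) (g : GG m n)
    (hg : g.perm = u) (hcol : g.col = a) : g = (⟨1, a⟩ : GG m n) := by
  refine GG.ext (by rw [hg, hu]) (by rw [hcol])

theorem diag_mem {p : ℕ} (H : Subgroup (GG m n))
    (hd : ∀ (i : Fin n) (c : ZMod m), c ∈ zmultiples ((p : ZMod m)) → dg i c ∈ H)
    (a : Fin n → ZMod m) (ha : ∀ i, a i ∈ zmultiples ((p : ZMod m))) :
    (⟨1, a⟩ : GG m n) ∈ H := by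
  let A : AddSubgroup (Fin n → ZMod m) :=
    { carrier := {b | (⟨1, b⟩ : GG m n) ∈ H}
      zero_mem' := by
        have : (⟨1, 0⟩ : GG m n) = 1 := rfl
        simpa [this] using H.one_mem
      add_mem' := by
        intro b c hb hc
        have : (⟨1, b + c⟩ : GG m n) = ⟨1, b⟩ * ⟨1, c⟩ := by
          refine GG.ext (by simp) ?_
          funext l
          simp
        simpa [this] using H.mul_mem hb hc
      neg_mem' := by
        intro b hb
        have : (⟨1, -b⟩ : GG m n) = (⟨1, b⟩ : GG m n)⁻¹ := by
          refine GG.ext (by simp) ?_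
          funext l
          simp
        simpa [this] using H.inv_mem hb }
  have : a ∈ A := by
    rw [← Finset.univ_sum_single a]
    exact A.sum_mem fun j _ => hd j (a j) (ha j)
  exact this

end GGAux

/-- A set `S` of reflections of `G(m,p,n)` generates `G(m,p,n)` if and only if
`wt(S)` generates the subgroup `pℤ/mℤ` of `ℤ/mℤ` and `π_{m/p}(S)` generates `G(p,p,n)`. -/
theorem closure_eq_Gmpn_iff (m p n : ℕ) (hm : 0 < m) (hp : 0 < p) (hn : 0 < n)
    (hpm : p ∣ m) (S : Set (GG m n)) (hS : ∀ s ∈ S, GG.IsRefl p s) :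
    Subgroup.closure S = GG.Gmpn m p n ↔
      (AddSubgroup.closure (GG.wt '' S) = AddSubgroup.zmultiples ((p : ZMod m)) ∧
        Subgroup.closure (GG.pimap p hpm '' S) = GG.Gmpn p p n) := by
  haveI : NeZero m := ⟨hm.ne'⟩
  haveI : NeZero p := ⟨hp.ne'⟩
  have himg : GG.pimap p hpm '' S = ⇑(GGAux.pihom p hpm) '' S := rfl
  constructor
  · intro hcl
    constructor
    · apply le_antisymm
      · rw [AddSubgroup.closure_le]
        rintro _ ⟨s, hs, rfl⟩
        exact GGAux.mem_Gmpn.mp (GGAux.refl_mem (hS s hs))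
      · rw [AddSubgroup.zmultiples_eq_closure, AddSubgroup.closure_le,
          Set.singleton_subset_iff]
        have hmem : GGAux.dg (⟨0, hn⟩ : Fin n) ((p : ZMod m)) ∈ GG.Gmpn m p n :=
          GGAux.mem_Gmpn.mpr (by rw [GGAux.wt_dg]; exact AddSubgroup.mem_zmultiples _)
        rw [← hcl] at hmem
        have hle : Subgroup.closure S ≤
            GG.Gsub m n ⊤ (AddSubgroup.closure (GG.wt '' S)) := by
          rw [Subgroup.closure_le]
          intro s hs
          exact ⟨fun i => AddSubgroup.mem_top _, AddSubgroup.subset_closure ⟨s, hs, rfl⟩⟩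
        have h2 := (hle hmem).2
        rwa [GGAux.wt_dg] at h2
    · rw [himg, ← MonoidHom.map_closure, hcl]
      exact GGAux.map_pihom_Gmpn hm hp hpm
  · rintro ⟨hwt, hpi⟩
    apply le_antisymm
    · rw [Subgroup.closure_le]
      intro s hs
      exact GGAux.refl_mem (hS s hs)
    · set H := Subgroup.closure S with hH
      have hmap : Subgroup.map (GGAux.pihom p hpm) H = GG.Gmpn p p n := by
        rw [hH, MonoidHom.map_closure, ← himg, hpi]
      have htrans : ∀ i j : Fin n, ∃ h ∈ H, h.perm i = j := by
        intro i j
        have hsw : (⟨Equiv.swap i j, 0⟩ : GG p n) ∈ GG.Gmpn p p n := by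
          refine GGAux.mem_Gmpn.mpr ?_
          have : GG.wt (⟨Equiv.swap i j, 0⟩ : GG p n) = 0 := by simp [GG.wt]
          rw [this]
          exact zero_mem _
        rw [← hmap] at hsw
        obtain ⟨h, hh, hph⟩ := hsw
        refine ⟨h, hh, ?_⟩
        have hpe : h.perm = Equiv.swap i j := congrArg (GG.perm (m := p)) hph
        rw [hpe]
        exact Equiv.swap_apply_left i j
      have hdg : ∀ (j : Fin n) (c : ZMod m), c ∈ AddSubgroup.zmultiples ((p : ZMod m)) →
          GGAux.dg j c ∈ H := by
        intro j c hc
        let B : AddSubgroup (ZMod m) :=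
          { carrier := {c | GGAux.dg j c ∈ H}
            zero_mem' := by
              show GGAux.dg j (0 : ZMod m) ∈ H
              rw [GGAux.dg_zero]
              exact H.one_mem
            add_mem' := fun {b c} hb hc => by
              show GGAux.dg j (b + c) ∈ H
              rw [← GGAux.dg_mul]
              exact H.mul_mem hb hc
            neg_mem' := fun {b} hb => by
              show GGAux.dg j (-b) ∈ H
              rw [← GGAux.dg_inv]
              exact H.inv_mem hb }
        suffices hsuff : AddSubgroup.zmultiples ((p : ZMod m)) ≤ B from hsuff hc
        rw [← hwt, AddSubgroup.closure_le]
        rintro _ ⟨s, hs, rfl⟩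
        rcases hS s hs with htl | ⟨hperm, i', hi0, hip, hzero⟩
        · show GGAux.dg j (GG.wt s) ∈ H
          rw [GGAux.wt_of_transpositionLike htl, GGAux.dg_zero]
          exact H.one_mem
        · show GGAux.dg j (GG.wt s) ∈ H
          have hcol : s.col = Pi.single i' (s.col i') := by
            funext l
            rcases eq_or_ne l i' with rfl | hl
            · rw [Pi.single_eq_same]
            · rw [Pi.single_eq_of_ne hl]
              exact hzero l hl
          have hseq : s = GGAux.dg i' (s.col i') := GG.ext hperm hcol
          obtain ⟨h, hh, hpj⟩ := htrans i' j
          have hconj : h * s * h⁻¹ ∈ H :=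
            H.mul_mem (H.mul_mem hh (Subgroup.subset_closure hs)) (H.inv_mem hh)
          rw [hseq, GGAux.conj_dg, hpj] at hconj
          rwa [GGAux.wt_of_diag hzero]
      intro g hg
      have hpg : GGAux.pihom p hpm g ∈ GG.Gmpn p p n := by
        refine GGAux.mem_Gmpn.mpr ?_
        rw [GGAux.wt_pihom,
          (GGAux.mem_zmult_iff hm hp hpm _).mp (GGAux.mem_Gmpn.mp hg)]
        exact zero_mem _
      rw [← hmap] at hpg
      obtain ⟨h, hh, hph⟩ := hpg
      have hperm1 : (g * h⁻¹).perm = 1 := by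
        have hpe : h.perm = g.perm := congrArg (GG.perm (m := p)) hph
        simp [hpe]
      have hcolmem : ∀ l, (g * h⁻¹).col l ∈ AddSubgroup.zmultiples ((p : ZMod m)) := by
        intro l
        refine (GGAux.mem_zmult_iff hm hp hpm _).mpr ?_
        have h1 : GGAux.pihom p hpm (g * h⁻¹) = 1 := by
          rw [map_mul, map_inv, hph, mul_inv_cancel]
        have h2 : (GGAux.pihom p hpm (g * h⁻¹)).col l = 0 := by rw [h1]; rfl
        exact h2
      have hghH : g * h⁻¹ ∈ H := by
        have hmem := GGAux.diag_mem H hdg ((g * h⁻¹).col) hcolmem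
        have heq : g * h⁻¹ = (⟨1, (g * h⁻¹).col⟩ : GG m n) := GG.ext hperm1 rfl
        rwa [← heq] at hmem
      have := H.mul_mem hghH hh
      rwa [inv_mul_cancel_right] at this
end

section
/- Let m ≥ 2 and let g ∈ ℤ/mℤ. For every N ≥ 0, the number of N-tuples (x_1, …, x_N) of nonzero elements of ℤ/mℤ with x_1 + ⋯ + x_N = g such that {x_1, …, x_N} generates the group ℤ/mℤ equals ∑_{r} μ(m/r) · ((r−1)^N − (−1)^N)/r, where the sum is over all divisors r of m that are divisible by the additive order of g, μ is the number-theoretic Möbius function, and (r−1)^N is interpreted with 0^0 = 1. -/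
open Finset AddSubgroup

section Auxiliary

lemma nat_card_sigma' {ι : Type*} [Fintype ι] (f : ι → Type*) [∀ i, Finite (f i)] :
    Nat.card (Σ i, f i) = ∑ i, Nat.card (f i) := by
  classical
  have : ∀ i, Fintype (f i) := fun i => Fintype.ofFinite _
  simp [Nat.card_eq_fintype_card, Fintype.card_sigma]

lemma count_fixed_sum (m : ℕ) [NeZero m] (N : ℕ) (g : ZMod m) :
    (Nat.card {x : Fin N → ZMod m // (∀ i, x i ≠ 0) ∧ ∑ i, x i = g} : ℚ)
      = (((m : ℚ) - 1) ^ N - (-1 : ℚ) ^ N) / m + (if g = 0 then (-1 : ℚ) ^ N else 0) := by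
  classical
  induction N generalizing g with
  | zero =>
    rcases eq_or_ne g 0 with hg | hg
    · have : Unique {x : Fin 0 → ZMod m // (∀ i, x i ≠ 0) ∧ ∑ i, x i = g} := by
        refine ⟨⟨⟨fun i => i.elim0, fun i => i.elim0, by simp [hg]⟩⟩, ?_⟩
        rintro ⟨x, hx⟩
        ext i; exact i.elim0
      rw [Nat.card_unique]
      simp [hg]
    · have : IsEmpty {x : Fin 0 → ZMod m // (∀ i, x i ≠ 0) ∧ ∑ i, x i = g} := by
        refine ⟨?_⟩; rintro ⟨x, hx1, hx2⟩
        exact hg (by simpa using hx2.symm)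
      rw [Nat.card_of_isEmpty]
      simp [hg]
  | succ N ih =>
    have E : {x : Fin (N+1) → ZMod m // (∀ i, x i ≠ 0) ∧ ∑ i, x i = g}
        ≃ Σ h : {h : ZMod m // h ≠ 0},
            {y : Fin N → ZMod m // (∀ i, y i ≠ 0) ∧ ∑ i, y i = g - h.1} := by
      refine ⟨fun x => ⟨⟨x.1 0, x.2.1 0⟩, ⟨Fin.tail x.1, fun i => x.2.1 i.succ, ?_⟩⟩,
              fun p => ⟨Fin.cons p.1.1 p.2.1, ?_, ?_⟩, ?_, ?_⟩
      · have := x.2.2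
        rw [Fin.sum_univ_succ] at this
        simp only [Fin.tail]
        rw [eq_sub_iff_add_eq, add_comm]
        exact this
      · intro i
        refine Fin.cases ?_ ?_ i
        · simpa using p.1.2
        · intro j; simpa using p.2.2.1 j
      · rw [Fin.sum_univ_succ]
        simp [p.2.2.2]
      · rintro ⟨x, hx⟩
        ext i
        simp [Fin.cons_self_tail]
      · rintro ⟨⟨h, hh⟩, ⟨y, hy⟩⟩
        ext i <;> simp [Fin.tail_cons]
    rw [Nat.card_congr E, nat_card_sigma']
    push_cast
    have hsub : ∑ h : {h : ZMod m // h ≠ 0},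
        ((Nat.card {y : Fin N → ZMod m // (∀ i, y i ≠ 0) ∧ ∑ i, y i = g - h.1} : ℚ))
        = ∑ h ∈ (univ : Finset (ZMod m)).erase 0,
            ((Nat.card {y : Fin N → ZMod m // (∀ i, y i ≠ 0) ∧ ∑ i, y i = g - h} : ℚ)) :=
      (Finset.sum_subtype ((univ : Finset (ZMod m)).erase 0) (fun x => by simp)
        (fun h => (Nat.card {y : Fin N → ZMod m // (∀ i, y i ≠ 0) ∧ ∑ i, y i = g - h} : ℚ))).symm
    rw [hsub]
    have : ∀ h ∈ (univ : Finset (ZMod m)).erase 0,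
        ((Nat.card {y : Fin N → ZMod m // (∀ i, y i ≠ 0) ∧ ∑ i, y i = g - h} : ℚ))
          = (((m : ℚ) - 1) ^ N - (-1 : ℚ) ^ N) / m + (if h = g then (-1 : ℚ) ^ N else 0) := by
      intro h _
      rw [ih]
      congr 1
      simp [sub_eq_zero, eq_comm]
    rw [Finset.sum_congr rfl this, Finset.sum_add_distrib, Finset.sum_const,
        Finset.sum_ite_eq' ((univ : Finset (ZMod m)).erase 0) g]
    have hcard : ((univ : Finset (ZMod m)).erase 0).card = m - 1 := by
      rw [Finset.card_erase_of_mem (mem_univ 0), Finset.card_univ, ZMod.card]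
    rw [hcard, nsmul_eq_mul]
    have hm0 : (m : ℚ) ≠ 0 := by
      exact_mod_cast Nat.cast_ne_zero.mpr (NeZero.ne m)
    have hm1 : 1 ≤ m := Nat.one_le_iff_ne_zero.mpr (NeZero.ne m)
    have hcast : ((m - 1 : ℕ) : ℚ) = (m : ℚ) - 1 := by
      push_cast [hm1]; ring
    rw [hcast]
    rcases eq_or_ne g 0 with hg | hg
    · simp only [hg, if_neg (by simp : (0 : ZMod m) ∉ (univ : Finset (ZMod m)).erase 0), if_pos rfl, ↓reduceIte]
      field_simp
      ring
    · simp only [if_pos (Finset.mem_erase.mpr ⟨hg, mem_univ g⟩), if_neg hg]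
      field_simp
      ring

variable {m r : ℕ}

/-- The embedding `ZMod r →+ ZMod m` sending `1` to `m/r`, for `r ∣ m`. -/
noncomputable def iotaHom (m r : ℕ) (hr : r ∣ m) : ZMod r →+ ZMod m :=
  ZMod.lift r ⟨(m / r) • Int.castAddHom (ZMod m), by
    have h : ((m / r * r : ℕ) : ZMod m) = 0 := by
      rw [Nat.div_mul_cancel hr, ZMod.natCast_self]
    simpa [nsmul_eq_mul, ← Nat.cast_mul] using h⟩

lemma iotaHom_intCast (hr : r ∣ m) (k : ℤ) :
    iotaHom m r hr ((k : ZMod r)) = (k : ZMod m) * ((m / r : ℕ) : ZMod m) := by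
  rw [iotaHom, ZMod.lift_coe]
  simp [nsmul_eq_mul]
  ring

lemma iotaHom_one (hr : r ∣ m) : iotaHom m r hr 1 = ((m / r : ℕ) : ZMod m) := by
  have := iotaHom_intCast hr 1
  simpa using this

lemma iotaHom_injective (hm : m ≠ 0) (hr : r ∣ m) : Function.Injective (iotaHom m r hr) := by
  have hr0 : r ≠ 0 := by rintro rfl; simp at hr; exact hm hr
  haveI : NeZero r := ⟨hr0⟩
  haveI : NeZero m := ⟨hm⟩
  have hd0 : m / r ≠ 0 := by
    have h1 := Nat.le_of_dvd (Nat.pos_of_ne_zero hm) hr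
    have h2 := Nat.div_pos h1 (Nat.pos_of_ne_zero hr0)
    omega
  rw [injective_iff_map_eq_zero]
  intro x hx
  have hxval : ((x.val : ℤ) : ZMod r) = x := by
    simp [ZMod.natCast_val, ZMod.intCast_cast, ZMod.cast_id]
  rw [← hxval, iotaHom_intCast] at hx
  have hdvd : ((x.val * (m / r) : ℕ) : ZMod m) = 0 := by
    push_cast
    push_cast at hx
    exact hx
  rw [ZMod.natCast_eq_zero_iff] at hdvd
  rw [mul_comm] at hdvd
  have h2 : (m / r) * r ∣ (m / r) * x.val := by rwa [Nat.div_mul_cancel hr]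
  have hrdvd : r ∣ x.val := (Nat.mul_dvd_mul_iff_left (Nat.pos_of_ne_zero hd0)).mp h2
  have hlt : x.val < r := ZMod.val_lt x
  have hv0 : x.val = 0 := Nat.eq_zero_of_dvd_of_lt hrdvd hlt
  exact (ZMod.val_eq_zero x).mp hv0

lemma iotaHom_range (hm : m ≠ 0) (hr : r ∣ m) :
    (iotaHom m r hr).range = zmultiples ((m / r : ℕ) : ZMod m) := by
  apply le_antisymm
  · rintro a ⟨x, rfl⟩
    obtain ⟨k, rfl⟩ := ZMod.intCast_surjective x
    rw [iotaHom_intCast]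
    exact ⟨k, by simp [zsmul_eq_mul, mul_comm]⟩
  · rw [AddSubgroup.zmultiples_le]
    exact ⟨1, iotaHom_one hr⟩

lemma addOrderOf_canonical (hm : m ≠ 0) (hr : r ∣ m) :
    addOrderOf ((m / r : ℕ) : ZMod m) = r := by
  rw [ZMod.addOrderOf_coe _ hm]
  have h1 : Nat.gcd m (m / r) = m / r := Nat.gcd_eq_right (Nat.div_dvd_of_dvd hr)
  rw [h1, Nat.div_div_self hr hm]

/-- every subgroup of `ZMod m` is `zmultiples` of some element -/
lemma subgroup_cyclic' (H : AddSubgroup (ZMod m)) : ∃ a : ZMod m, H = zmultiples a := by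
  obtain ⟨a, ha⟩ := Int.subgroup_cyclic (H.comap (Int.castAddHom (ZMod m)))
  refine ⟨(a : ZMod m), ?_⟩
  have hsurj : Function.Surjective (Int.castAddHom (ZMod m)) := ZMod.intCast_surjective
  have := AddSubgroup.map_comap_eq_self_of_surjective hsurj H
  rw [← this, ha, AddMonoidHom.map_closure]
  rw [AddSubgroup.zmultiples_eq_closure]
  simp

lemma mem_zmultiples_canonical (hm : m ≠ 0) (a : ZMod m) :
    a ∈ zmultiples ((m / addOrderOf a : ℕ) : ZMod m) := by
  haveI : NeZero m := ⟨hm⟩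
  set k := addOrderOf a with hk
  have hk0 : 0 < k := addOrderOf_pos a
  have hka : k • a = 0 := addOrderOf_nsmul_eq_zero a
  have hkm : k ∣ m := by
    have := addOrderOf_dvd_natCard a
    simpa [Nat.card_eq_fintype_card, ZMod.card] using this
  have hval : ((a.val : ℕ) : ZMod m) = a := by
    simp [ZMod.natCast_val, ZMod.cast_id]
  have hzero : ((k * a.val : ℕ) : ZMod m) = 0 := by
    push_cast
    rw [hval, ← nsmul_eq_mul, hka]
  rw [ZMod.natCast_eq_zero_iff] at hzero
  have h2 : k * (m / k) ∣ k * a.val := by rwa [Nat.mul_div_cancel' hkm]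
  obtain ⟨t, ht⟩ := (Nat.mul_dvd_mul_iff_left hk0).mp h2
  refine AddSubgroup.mem_zmultiples_iff.mpr ⟨(t : ℤ), ?_⟩
  have : ((m / k * t : ℕ) : ZMod m) = a := by rw [← ht, hval]
  rw [← this]
  push_cast
  rw [zsmul_eq_mul]
  push_cast
  ring

lemma subgroup_canonical (hm : m ≠ 0) (H : AddSubgroup (ZMod m)) :
    Nat.card H ∣ m ∧ H = zmultiples ((m / Nat.card H : ℕ) : ZMod m) := by
  haveI : NeZero m := ⟨hm⟩
  obtain ⟨a, rfl⟩ := subgroup_cyclic' H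
  rw [Nat.card_zmultiples]
  set k := addOrderOf a with hk
  have hkm : k ∣ m := by
    have := addOrderOf_dvd_natCard a
    simpa [Nat.card_eq_fintype_card, ZMod.card] using this
  refine ⟨hkm, ?_⟩
  have hle : zmultiples a ≤ zmultiples ((m / k : ℕ) : ZMod m) :=
    (AddSubgroup.zmultiples_le).mpr (mem_zmultiples_canonical hm a)
  have hcard : Nat.card (zmultiples ((m / k : ℕ) : ZMod m)) = k := by
    rw [Nat.card_zmultiples, addOrderOf_canonical hm hkm]
  apply SetLike.coe_injective
  refine Set.eq_of_subset_of_ncard_le hle ?_ (Set.toFinite _)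
  rw [← Nat.card_coe_set_eq, ← Nat.card_coe_set_eq]
  simp only [SetLike.coe_sort_coe]
  rw [Nat.card_zmultiples a, hcard]

lemma closure_comp_iota (hm : m ≠ 0) (hr : r ∣ m) {N : ℕ} (y : Fin N → ZMod r) :
    AddSubgroup.closure (Set.range (iotaHom m r hr ∘ y))
      = AddSubgroup.map (iotaHom m r hr) (AddSubgroup.closure (Set.range y)) := by
  rw [Set.range_comp, AddMonoidHom.map_closure]

lemma transport_card (hm : m ≠ 0) (hr : r ∣ m) (g : ZMod m) (g' : ZMod r)
    (hg : iotaHom m r hr g' = g) (N : ℕ) :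
    Nat.card {x : Fin N → ZMod m // (∀ i, x i ≠ 0) ∧ ∑ i, x i = g ∧
        AddSubgroup.closure (Set.range x) = zmultiples ((m / r : ℕ) : ZMod m)}
      = Nat.card {y : Fin N → ZMod r // (∀ i, y i ≠ 0) ∧ ∑ i, y i = g' ∧
        AddSubgroup.closure (Set.range y) = ⊤} := by
  have hinj := iotaHom_injective hm hr
  have hrange := iotaHom_range hm hr
  have hmap_top : AddSubgroup.map (iotaHom m r hr) ⊤ = zmultiples ((m / r : ℕ) : ZMod m) := by
    rw [← AddMonoidHom.range_eq_map, hrange]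
  set ι := iotaHom m r hr
  have prop : ∀ y : {y : Fin N → ZMod r // (∀ i, y i ≠ 0) ∧ ∑ i, y i = g' ∧
      AddSubgroup.closure (Set.range y) = ⊤},
      (∀ i, (ι ∘ y.1) i ≠ 0) ∧ (∑ i, (ι ∘ y.1) i = g) ∧
        AddSubgroup.closure (Set.range (ι ∘ y.1)) = zmultiples ((m / r : ℕ) : ZMod m) := by
    intro y
    refine ⟨?_, ?_, ?_⟩
    · intro i h
      exact y.2.1 i (hinj (by simpa using h))
    · simp only [Function.comp_apply, ← hg, ← map_sum]
      congr 1
      exact y.2.2.1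
    · rw [closure_comp_iota hm hr, y.2.2.2, hmap_top]
  refine (Nat.card_eq_of_bijective (fun y => ⟨ι ∘ y.1, prop y⟩) ⟨?_, ?_⟩).symm
  · intro y y' h
    apply Subtype.ext
    funext i
    apply hinj
    exact congrFun (congrArg Subtype.val h) i
  · rintro ⟨x, hx1, hx2, hx3⟩
    have hmem : ∀ i, ∃ yi, ι yi = x i := by
      intro i
      have : x i ∈ zmultiples ((m / r : ℕ) : ZMod m) := by
        rw [← hx3]
        exact AddSubgroup.subset_closure (Set.mem_range_self i)
      rw [← hrange] at this
      exact this
    choose y hy using hmem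
    have hxy : ι ∘ y = x := funext hy
    refine ⟨⟨y, ?_, ?_, ?_⟩, ?_⟩
    · intro i h
      exact hx1 i (by rw [← hy i, h, map_zero])
    · apply hinj
      rw [map_sum]
      simp only [hy]
      rw [hx2, hg]
    · apply AddSubgroup.map_injective hinj
      rw [← closure_comp_iota hm hr, hxy, hx3, hmap_top]
    · exact Subtype.ext hxy

lemma partition_card (hm : m ≠ 0) (g : ZMod m) (N : ℕ) :
    Nat.card {x : Fin N → ZMod m // (∀ i, x i ≠ 0) ∧ ∑ i, x i = g}
      = ∑ r ∈ m.divisors, Nat.card {x : Fin N → ZMod m // (∀ i, x i ≠ 0) ∧ ∑ i, x i = g ∧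
          AddSubgroup.closure (Set.range x) = zmultiples ((m / r : ℕ) : ZMod m)} := by
  classical
  haveI : NeZero m := ⟨hm⟩
  have E : {x : Fin N → ZMod m // (∀ i, x i ≠ 0) ∧ ∑ i, x i = g}
      ≃ Σ r : {r : ℕ // r ∈ m.divisors},
          {x : Fin N → ZMod m // (∀ i, x i ≠ 0) ∧ ∑ i, x i = g ∧
            AddSubgroup.closure (Set.range x) = zmultiples ((m / r.1 : ℕ) : ZMod m)} := by
    refine ⟨fun x => ⟨⟨Nat.card (AddSubgroup.closure (Set.range x.1)),
        Nat.mem_divisors.mpr ⟨(subgroup_canonical hm _).1, hm⟩⟩,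
        ⟨x.1, x.2.1, x.2.2, (subgroup_canonical hm _).2⟩⟩,
        fun p => ⟨p.2.1, p.2.2.1, p.2.2.2.1⟩, ?_, ?_⟩
    · rintro ⟨x, hx⟩; rfl
    · rintro ⟨⟨r, hr⟩, ⟨x, hx1, hx2, hx3⟩⟩
      have hrm : r ∣ m := (Nat.mem_divisors.mp hr).1
      have hcr : Nat.card (AddSubgroup.closure (Set.range x)) = r := by
        rw [hx3, Nat.card_zmultiples, addOrderOf_canonical hm hrm]
      subst hcr
      rfl
  rw [Nat.card_congr E, nat_card_sigma']
  exact (Finset.sum_subtype m.divisors (fun x => Iff.rfl)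
    (fun r => Nat.card {x : Fin N → ZMod m // (∀ i, x i ≠ 0) ∧ ∑ i, x i = g ∧
      AddSubgroup.closure (Set.range x) = zmultiples ((m / r : ℕ) : ZMod m)})).symm

lemma card_bot_piece (hm : m ≠ 0) (g : ZMod m) (N : ℕ) :
    Nat.card {x : Fin N → ZMod m // (∀ i, x i ≠ 0) ∧ ∑ i, x i = g ∧
        AddSubgroup.closure (Set.range x) = zmultiples ((m / 1 : ℕ) : ZMod m)}
      = if N = 0 ∧ g = 0 then 1 else 0 := by
  have hz : zmultiples ((m / 1 : ℕ) : ZMod m) = (⊥ : AddSubgroup (ZMod m)) := by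
    rw [Nat.div_one, ZMod.natCast_self]
    exact zmultiples_zero_eq_bot
  rw [hz]
  rcases Nat.eq_zero_or_pos N with hN | hN
  · subst hN
    rcases eq_or_ne g 0 with hg | hg
    · rw [if_pos ⟨rfl, hg⟩]
      have : Unique {x : Fin 0 → ZMod m // (∀ i, x i ≠ 0) ∧ ∑ i, x i = g ∧
          AddSubgroup.closure (Set.range x) = (⊥ : AddSubgroup (ZMod m))} := by
        refine ⟨⟨⟨fun i => i.elim0, fun i => i.elim0, by simp [hg], ?_⟩⟩, ?_⟩
        · rw [Set.range_eq_empty, AddSubgroup.closure_empty]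
        · rintro ⟨x, hx⟩; ext i; exact i.elim0
      exact Nat.card_unique
    · rw [if_neg (by tauto)]
      have : IsEmpty {x : Fin 0 → ZMod m // (∀ i, x i ≠ 0) ∧ ∑ i, x i = g ∧
          AddSubgroup.closure (Set.range x) = (⊥ : AddSubgroup (ZMod m))} := by
        refine ⟨?_⟩; rintro ⟨x, hx1, hx2, hx3⟩
        exact hg (by simpa using hx2.symm)
      exact Nat.card_of_isEmpty
  · rw [if_neg (by rintro ⟨h0, _⟩; omega)]
    have : IsEmpty {x : Fin N → ZMod m // (∀ i, x i ≠ 0) ∧ ∑ i, x i = g ∧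
        AddSubgroup.closure (Set.range x) = (⊥ : AddSubgroup (ZMod m))} := by
      refine ⟨?_⟩; rintro ⟨x, hx1, hx2, hx3⟩
      have i0 : Fin N := ⟨0, hN⟩
      have : x i0 ∈ AddSubgroup.closure (Set.range x) :=
        AddSubgroup.subset_closure (Set.mem_range_self i0)
      rw [hx3] at this
      exact hx1 i0 (by simpa using this)
    exact Nat.card_of_isEmpty

lemma card_not_dvd_piece (hm : m ≠ 0) (hr : r ∣ m) (g : ZMod m) (N : ℕ)
    (h : ¬ addOrderOf g ∣ r) :
    Nat.card {x : Fin N → ZMod m // (∀ i, x i ≠ 0) ∧ ∑ i, x i = g ∧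
        AddSubgroup.closure (Set.range x) = zmultiples ((m / r : ℕ) : ZMod m)} = 0 := by
  haveI : NeZero m := ⟨hm⟩
  have : IsEmpty {x : Fin N → ZMod m // (∀ i, x i ≠ 0) ∧ ∑ i, x i = g ∧
      AddSubgroup.closure (Set.range x) = zmultiples ((m / r : ℕ) : ZMod m)} := by
    refine ⟨?_⟩; rintro ⟨x, hx1, hx2, hx3⟩
    have hg : g ∈ zmultiples ((m / r : ℕ) : ZMod m) := by
      rw [← hx2, ← hx3]
      exact AddSubgroup.sum_mem _ (fun i _ => AddSubgroup.subset_closure (Set.mem_range_self i))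
    have hdvd := AddSubgroup.addOrderOf_dvd_natCard _ hg
    rw [Nat.card_zmultiples, addOrderOf_canonical hm hr] at hdvd
    exact h hdvd
  exact Nat.card_of_isEmpty

lemma exists_preimage (hm : m ≠ 0) (hr : r ∣ m) (g : ZMod m) (h : addOrderOf g ∣ r) :
    ∃ g' : ZMod r, iotaHom m r hr g' = g ∧ addOrderOf g' = addOrderOf g := by
  haveI : NeZero m := ⟨hm⟩
  have hk0 : 0 < addOrderOf g := addOrderOf_pos g
  have hnat : m / addOrderOf g = (m / r) * (r / addOrderOf g) := by
    have hmul : (m / r) * (r / addOrderOf g) * addOrderOf g = m := by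
      rw [mul_assoc, Nat.div_mul_cancel h, Nat.div_mul_cancel hr]
    exact Nat.div_eq_of_eq_mul_left hk0 hmul.symm
  have hmem : g ∈ zmultiples ((m / r : ℕ) : ZMod m) := by
    have h1 := mem_zmultiples_canonical hm g
    have h2 : ((m / addOrderOf g : ℕ) : ZMod m) ∈ zmultiples ((m / r : ℕ) : ZMod m) := by
      have he : ((m / addOrderOf g : ℕ) : ZMod m)
          = (r / addOrderOf g) • ((m / r : ℕ) : ZMod m) := by
        rw [hnat, nsmul_eq_mul]
        push_cast
        ring
      rw [he]
      exact AddSubgroup.nsmul_mem _ (AddSubgroup.mem_zmultiples _) _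
    have h3 : zmultiples ((m / addOrderOf g : ℕ) : ZMod m)
        ≤ zmultiples ((m / r : ℕ) : ZMod m) := (AddSubgroup.zmultiples_le).mpr h2
    exact h3 h1
  rw [← iotaHom_range hm hr] at hmem
  obtain ⟨g', hg'⟩ := hmem
  refine ⟨g', hg', ?_⟩
  rw [← hg']
  exact (addOrderOf_injective _ (iotaHom_injective hm hr) g').symm

end Auxiliary

section Moebius
open ArithmeticFunction

lemma moebius_double (B : ℕ → ℚ) (m : ℕ) (hm : 0 < m) :
    ∑ r ∈ m.divisors, ∑ s ∈ r.divisors, ((moebius (r / s) : ℤ) : ℚ) * B s = B m := by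
  have key := (ArithmeticFunction.sum_eq_iff_sum_mul_moebius_eq
    (f := fun r => ∑ s ∈ r.divisors, ((moebius (r / s) : ℤ) : ℚ) * B s)
    (g := B)).mpr ?_ m hm
  · exact key
  · intro n hn
    rw [← Nat.sum_divisorsAntidiagonal' (fun d s => ((moebius d : ℤ) : ℚ) * B s)]

lemma key_arith (k m N : ℕ) (hk : k ∣ m) (hm : 0 < m) :
    ∑ r ∈ m.divisors.filter (fun r => k ∣ r),
      ∑ s ∈ r.divisors.filter (fun s => k ∣ s),
        ((moebius (r / s) : ℤ) : ℚ) * (((s : ℚ) - 1) ^ N - (-1 : ℚ) ^ N) / (s : ℚ)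
      = (((m : ℚ) - 1) ^ N - (-1 : ℚ) ^ N) / (m : ℚ) := by
  classical
  set B : ℕ → ℚ := fun s => if k ∣ s then (((s : ℚ) - 1) ^ N - (-1 : ℚ) ^ N) / (s : ℚ) else 0
    with hB
  have inner : ∀ r, ∑ s ∈ r.divisors.filter (fun s => k ∣ s),
      ((moebius (r / s) : ℤ) : ℚ) * (((s : ℚ) - 1) ^ N - (-1 : ℚ) ^ N) / (s : ℚ)
      = ∑ s ∈ r.divisors, ((moebius (r / s) : ℤ) : ℚ) * B s := by
    intro r
    rw [Finset.sum_filter]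
    apply Finset.sum_congr rfl
    intro s _
    by_cases h : k ∣ s <;> simp [hB, h, mul_div_assoc]
  have outer_zero : ∀ r ∈ m.divisors, ¬ (k ∣ r) →
      ∑ s ∈ r.divisors, ((moebius (r / s) : ℤ) : ℚ) * B s = 0 := by
    intro r hr hkr
    apply Finset.sum_eq_zero
    intro s hs
    have : ¬ k ∣ s := fun h => hkr (h.trans (Nat.mem_divisors.mp hs).1)
    simp [hB, this]
  calc ∑ r ∈ m.divisors.filter (fun r => k ∣ r),
      ∑ s ∈ r.divisors.filter (fun s => k ∣ s),
        ((moebius (r / s) : ℤ) : ℚ) * (((s : ℚ) - 1) ^ N - (-1 : ℚ) ^ N) / (s : ℚ)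
      = ∑ r ∈ m.divisors.filter (fun r => k ∣ r),
        ∑ s ∈ r.divisors, ((moebius (r / s) : ℤ) : ℚ) * B s :=
        Finset.sum_congr rfl (fun r _ => inner r)
    _ = ∑ r ∈ m.divisors, ∑ s ∈ r.divisors, ((moebius (r / s) : ℤ) : ℚ) * B s := by
        rw [Finset.sum_filter_of_ne]
        intro r hr h
        by_contra hkr
        exact h (outer_zero r hr hkr)
    _ = B m := moebius_double B m hm
    _ = (((m : ℚ) - 1) ^ N - (-1 : ℚ) ^ N) / (m : ℚ) := by simp [hB, hk]

end Moebius

lemma aux_main : ∀ m : ℕ, 2 ≤ m → ∀ (g : ZMod m) (N : ℕ),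
    (Nat.card {x : Fin N → ZMod m // (∀ i, x i ≠ 0) ∧ ∑ i, x i = g ∧
        AddSubgroup.closure (Set.range x) = ⊤} : ℚ) =
      ∑ r ∈ Finset.filter (fun r => addOrderOf g ∣ r) (Nat.divisors m),
        ((ArithmeticFunction.moebius (m / r) : ℤ) : ℚ) *
          (((r : ℚ) - 1) ^ N - (-1 : ℚ) ^ N) / (r : ℚ) := by
  intro m
  induction m using Nat.strong_induction_on with
  | _ m IH =>
  intro hm g N
  classical
  have hm0 : m ≠ 0 := by omega
  haveI : NeZero m := ⟨hm0⟩
  have hk0 : 0 < addOrderOf g := addOrderOf_pos g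
  have hkm : addOrderOf g ∣ m := by
    have := addOrderOf_dvd_natCard g
    simpa [Nat.card_eq_fintype_card, ZMod.card] using this
  set k := addOrderOf g with hkdef
  have htop : zmultiples ((m / m : ℕ) : ZMod m) = (⊤ : AddSubgroup (ZMod m)) := by
    apply AddSubgroup.eq_top_of_card_eq
    rw [Nat.card_zmultiples, addOrderOf_canonical hm0 dvd_rfl,
        Nat.card_eq_fintype_card, ZMod.card]
  set c : ℕ → ℚ := fun r => (Nat.card {x : Fin N → ZMod m // (∀ i, x i ≠ 0) ∧ ∑ i, x i = g ∧
      AddSubgroup.closure (Set.range x) = zmultiples ((m / r : ℕ) : ZMod m)} : ℚ) with hc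
  set R : ℕ → ℚ := fun r => ∑ s ∈ Finset.filter (fun s => k ∣ s) (Nat.divisors r),
      ((ArithmeticFunction.moebius (r / s) : ℤ) : ℚ) *
        (((s : ℚ) - 1) ^ N - (-1 : ℚ) ^ N) / (s : ℚ) with hR
  have hgoal_lhs : c m = (Nat.card {x : Fin N → ZMod m // (∀ i, x i ≠ 0) ∧ ∑ i, x i = g ∧
      AddSubgroup.closure (Set.range x) = ⊤} : ℚ) := by
    rw [hc]
    simp only [htop]
  have hA : (((m : ℚ) - 1) ^ N - (-1 : ℚ) ^ N) / m + (if g = 0 then (-1 : ℚ) ^ N else 0)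
      = ∑ r ∈ m.divisors, c r := by
    rw [← count_fixed_sum m N g]
    have := congrArg (fun n : ℕ => (n : ℚ)) (partition_card hm0 g N)
    simp only [Nat.cast_sum] at this
    exact this
  have hmdiv : m ∈ m.divisors := Nat.mem_divisors_self m hm0
  have hmfilt : m ∈ Finset.filter (fun r => k ∣ r) m.divisors :=
    Finset.mem_filter.mpr ⟨hmdiv, hkm⟩
  have heval : ∀ r ∈ m.divisors.erase m,
      c r = (if k ∣ r then R r + (if r = 1 then (-1 : ℚ) ^ N else 0) else 0) := by
    intro r hrmem
    obtain ⟨hne, hrdiv⟩ := Finset.mem_erase.mp hrmem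
    have hrm : r ∣ m := (Nat.mem_divisors.mp hrdiv).1
    have hr0 : r ≠ 0 := by
      rintro rfl
      exact hm0 (Nat.eq_zero_of_zero_dvd hrm)
    by_cases hkr : k ∣ r
    · rw [if_pos hkr]
      by_cases hr1 : r = 1
      · subst hr1
        have hk1 : k = 1 := Nat.dvd_one.mp hkr
        have hg0 : g = 0 := by
          have := hkdef.symm.trans hk1
          exact AddMonoid.addOrderOf_eq_one_iff.mp this
        have hcb : c 1 = if N = 0 ∧ g = 0 then 1 else 0 := by
          simp only [hc]
          rw [card_bot_piece hm0 g N]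
          split <;> simp
        have hR1 : R 1 = (0 : ℚ) ^ N - (-1 : ℚ) ^ N := by
          simp only [hR]
          rw [Nat.divisors_one]
          rw [Finset.filter_singleton]
          rw [if_pos hkr]
          simp
        rw [hcb, hR1, if_pos rfl]
        rcases Nat.eq_zero_or_pos N with hN | hN
        · subst hN; simp [hg0]
        · rw [if_neg (by rintro ⟨h1, _⟩; omega)]
          rw [zero_pow (by omega)]
          ring
      · have hrlt : r < m := lt_of_le_of_ne (Nat.le_of_dvd (by omega) hrm) hne
        have hr2 : 2 ≤ r := by omega
        obtain ⟨g', hg', hord⟩ := exists_preimage hm0 hrm g hkr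
        have hIH := IH r hrlt hr2 g' N
        rw [hord, ← hkdef] at hIH
        have htrans := transport_card hm0 hrm g g' hg' N
        simp only [hc]
        rw [htrans, hIH, if_neg hr1, add_zero]
    · rw [if_neg hkr]
      simp only [hc]
      rw [card_not_dvd_piece hm0 hrm g N (by rw [← hkdef]; exact hkr)]
      simp
  have hsum_erase : ∑ r ∈ m.divisors.erase m, c r
      = (∑ r ∈ (Finset.filter (fun r => k ∣ r) m.divisors).erase m, R r)
        + (if k = 1 then (-1 : ℚ) ^ N else 0) := by
    rw [Finset.sum_congr rfl heval, ← Finset.sum_filter, Finset.filter_erase,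
        Finset.sum_add_distrib, Finset.sum_ite_eq'
          ((Finset.filter (fun r => k ∣ r) m.divisors).erase m) 1 (fun _ => (-1 : ℚ) ^ N)]
    congr 1
    have hmem1 : (1 ∈ (Finset.filter (fun r => k ∣ r) m.divisors).erase m) ↔ k = 1 := by
      rw [Finset.mem_erase, Finset.mem_filter, Nat.one_mem_divisors]
      constructor
      · rintro ⟨-, -, h⟩; exact Nat.dvd_one.mp h
      · intro hk1
        exact ⟨by omega, hm0, by rw [hk1]⟩
    by_cases hk1 : k = 1
    · rw [if_pos (hmem1.mpr hk1), if_pos hk1]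
    · rw [if_neg (fun h => hk1 (hmem1.mp h)), if_neg hk1]
  have hkey := key_arith k m N hkm (by omega)
  have hkey' : ∑ r ∈ m.divisors.filter (fun r => k ∣ r), R r
      = (((m : ℚ) - 1) ^ N - (-1 : ℚ) ^ N) / (m : ℚ) := by
    rw [← hkey]
  have hsplit2 : ∑ r ∈ Finset.filter (fun r => k ∣ r) m.divisors, R r
      = R m + ∑ r ∈ (Finset.filter (fun r => k ∣ r) m.divisors).erase m, R r :=
    (Finset.add_sum_erase _ _ hmfilt).symm
  have hsplit1 : ∑ r ∈ m.divisors, c r = c m + ∑ r ∈ m.divisors.erase m, c r :=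
    (Finset.add_sum_erase _ _ hmdiv).symm
  have hgk : (if g = 0 then (-1 : ℚ) ^ N else 0) = (if k = 1 then (-1 : ℚ) ^ N else 0) := by
    by_cases hg : g = 0
    · rw [if_pos hg, if_pos (by rw [hkdef, hg]; simp)]
    · rw [if_neg hg, if_neg (fun h => hg (AddMonoid.addOrderOf_eq_one_iff.mp (hkdef.symm.trans h)))]
  have hRm : R m = ∑ r ∈ Finset.filter (fun r => addOrderOf g ∣ r) (Nat.divisors m),
      ((ArithmeticFunction.moebius (m / r) : ℤ) : ℚ) *
        (((r : ℚ) - 1) ^ N - (-1 : ℚ) ^ N) / (r : ℚ) := by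
    simp only [hR, hkdef]
  rw [← hgoal_lhs, ← hRm]
  linarith [hA, hsum_erase, hkey', hsplit2, hsplit1, hgk]

/-- Counting full reflection factorizations in the cyclic group `G(m,1,1) ≅ ℤ/mℤ`: the
number of `N`-tuples of nonzero elements of `ℤ/mℤ` with sum `g` that generate `ℤ/mℤ` is
`∑_{r} μ(m/r) · ((r−1)^N − (−1)^N)/r`, the sum being over divisors `r` of `m` divisible
by the additive order of `g`. -/
theorem cyclic_full_factorization_count (m : ℕ) (hm : 2 ≤ m) (g : ZMod m) (N : ℕ) :
    (Nat.card {x : Fin N → ZMod m // (∀ i, x i ≠ 0) ∧ ∑ i, x i = g ∧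
        AddSubgroup.closure (Set.range x) = ⊤} : ℚ) =
      ∑ r ∈ Finset.filter (fun r => addOrderOf g ∣ r) (Nat.divisors m),
        ((ArithmeticFunction.moebius (m / r) : ℤ) : ℚ) *
          (((r : ℚ) - 1) ^ N - (-1 : ℚ) ^ N) / (r : ℚ) := by
  exact aux_main m hm g N
end

section
/- Let N and R be positive integers with R ∣ N, and let g ∈ ℤ/Nℤ have additive order N/R. Then the number of pairs (x, y) ∈ (ℤ/Nℤ) × (ℤ/Nℤ) with x + y = g such that {x, y} generates the group ℤ/Nℤ equals (N/R) · φ(R), where φ is Euler's totient function. -/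
set_option maxHeartbeats 1000000

open AddSubgroup Function

lemma closure_singleton_eq_top_iff_isUnit {R : ℕ} [NeZero R] (z : ZMod R) :
    AddSubgroup.closure {z} = ⊤ ↔ IsUnit z := by
  rw [← AddSubgroup.zmultiples_eq_closure]
  constructor
  · intro h
    have h1 : (1 : ZMod R) ∈ AddSubgroup.zmultiples z := h ▸ AddSubgroup.mem_top 1
    obtain ⟨k, hk⟩ := h1
    exact IsUnit.of_mul_eq_one (a := z) (k : ZMod R) (by rw [mul_comm, ← zsmul_eq_mul]; exact_mod_cast hk)
  · rintro ⟨u, rfl⟩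
    rw [eq_top_iff]
    intro a _
    refine ⟨((a * (u⁻¹ : (ZMod R)ˣ)).val : ℤ), ?_⟩
    show ((a * (u⁻¹ : (ZMod R)ˣ)).val : ℤ) • (u : ZMod R) = a
    rw [zsmul_eq_mul]
    push_cast
    rw [ZMod.natCast_val, ZMod.cast_id, mul_assoc]
    simp

/-- Let `R ∣ N` and let `g ∈ ℤ/Nℤ` have additive order `N/R`.  The number of pairs
`(x, y)` with `x + y = g` such that `{x, y}` generates `ℤ/Nℤ` is `(N/R)·φ(R)`. -/
theorem cyclic_length_two_full_count (N R : ℕ) (hN : 0 < N) (hR : 0 < R) (hRN : R ∣ N)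
    (g : ZMod N) (hg : addOrderOf g = N / R) :
    Nat.card {xy : ZMod N × ZMod N // xy.1 + xy.2 = g ∧
        AddSubgroup.closure {xy.1, xy.2} = ⊤} = (N / R) * Nat.totient R := by
  haveI : NeZero N := ⟨hN.ne'⟩
  haveI : NeZero R := ⟨hR.ne'⟩
  set π : ZMod N →+ ZMod R := (ZMod.castHom hRN (ZMod R)).toAddMonoidHom with hπ
  have hπnat : ∀ a : ℕ, π (a : ZMod N) = (a : ZMod R) := fun a => map_natCast (ZMod.castHom hRN (ZMod R)) a
  have hsurj : Surjective π := by
    intro u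
    exact ⟨(u.val : ZMod N), by rw [hπnat, ZMod.natCast_val, ZMod.cast_id]⟩
  -- gcd N g.val = R
  have hgval : ((g.val : ZMod N)) = g := by simp [ZMod.natCast_val, ZMod.cast_id]
  have hgcd : N.gcd g.val = R := by
    have h1 : addOrderOf ((g.val : ℕ) : ZMod N) = N / N.gcd g.val :=
      ZMod.addOrderOf_coe g.val (NeZero.ne N)
    rw [hgval, hg] at h1
    have h2 : N.gcd g.val ∣ N := Nat.gcd_dvd_left _ _
    calc N.gcd g.val = N / (N / N.gcd g.val) := (Nat.div_div_self h2 (NeZero.ne N)).symm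
      _ = N / (N / R) := by rw [h1]
      _ = R := Nat.div_div_self hRN (NeZero.ne N)
  have hgker : g ∈ π.ker := by
    rw [AddMonoidHom.mem_ker, ← hgval, hπnat, ZMod.natCast_eq_zero_iff]
    exact hgcd ▸ Nat.gcd_dvd_right N g.val
  -- card of kernel
  have hNR : 0 < N / R := Nat.div_pos (Nat.le_of_dvd hN hRN) hR
  have hcardker : Nat.card π.ker = N / R := by
    have h1 : Nat.card (ZMod N) = Nat.card (ZMod N ⧸ π.ker) * Nat.card π.ker :=
      AddSubgroup.card_eq_card_quotient_mul_card_addSubgroup π.ker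
    have h2 : Nat.card (ZMod N ⧸ π.ker) = Nat.card (ZMod R) :=
      Nat.card_congr (QuotientAddGroup.quotientKerEquivOfSurjective π hsurj).toEquiv
    rw [h2, Nat.card_zmod, Nat.card_zmod] at h1
    exact (Nat.div_eq_of_eq_mul_left hR (h1.trans (mul_comm _ _))).symm
  -- zmultiples g = ker π
  have hzker : AddSubgroup.zmultiples g = π.ker := by
    refine AddSubgroup.eq_of_le_of_card_ge ?_ ?_
    · intro y hy
      obtain ⟨k, rfl⟩ := hy
      rw [AddMonoidHom.mem_ker, map_zsmul, AddMonoidHom.mem_ker.mp hgker, smul_zero]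
    · rw [hcardker, Nat.card_zmultiples, hg]
  -- key equivalence
  have key : ∀ x : ZMod N, AddSubgroup.closure {x, g - x} = ⊤ ↔ IsUnit (π x) := by
    intro x
    have hcl : AddSubgroup.closure {x, g - x} = AddSubgroup.closure {x, g} := by
      have hx1 : x ∈ AddSubgroup.closure {x, g} := AddSubgroup.subset_closure (Set.mem_insert _ _)
      have hg1 : g ∈ AddSubgroup.closure {x, g} := AddSubgroup.subset_closure (Set.mem_insert_of_mem _ rfl)
      have hx2 : x ∈ AddSubgroup.closure {x, g - x} :=
        AddSubgroup.subset_closure (Set.mem_insert _ _)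
      have hgx2 : g - x ∈ AddSubgroup.closure {x, g - x} :=
        AddSubgroup.subset_closure (Set.mem_insert_of_mem _ rfl)
      apply le_antisymm <;>
        rw [AddSubgroup.closure_le, Set.insert_subset_iff, Set.singleton_subset_iff]
      · exact ⟨hx1, sub_mem hg1 hx1⟩
      · exact ⟨hx2, by simpa using add_mem hx2 hgx2⟩
    have hmap : AddSubgroup.map π (AddSubgroup.closure {x, g}) = AddSubgroup.closure {π x} := by
      rw [AddMonoidHom.map_closure, Set.image_pair, AddMonoidHom.mem_ker.mp hgker,
        ← Set.singleton_union, AddSubgroup.closure_union, AddSubgroup.closure_singleton_zero,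
        sup_bot_eq]
    rw [hcl, ← closure_singleton_eq_top_iff_isUnit, ← hmap]
    constructor
    · rintro h
      rw [h]
      rw [← AddMonoidHom.range_eq_map, AddMonoidHom.range_eq_top]
      exact hsurj
    · intro h
      have := congrArg (AddSubgroup.comap π) h
      rw [AddSubgroup.comap_map_eq, AddSubgroup.comap_top] at this
      have hker : π.ker ≤ AddSubgroup.closure {x, g} := by
        rw [← hzker, AddSubgroup.zmultiples_le]
        exact AddSubgroup.subset_closure (Set.mem_insert_of_mem _ rfl)
      rwa [sup_of_le_left hker] at this
  -- build the equivalences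
  have e1 : {xy : ZMod N × ZMod N // xy.1 + xy.2 = g ∧ AddSubgroup.closure {xy.1, xy.2} = ⊤} ≃
      {x : ZMod N // IsUnit (π x)} :=
    { toFun := fun p => ⟨p.1.1, (key p.1.1).mp (by
        have h2 := p.2.2
        have h1 := p.2.1
        have h3 : p.1.2 = g - p.1.1 := eq_sub_of_add_eq' h1
        rwa [h3] at h2)⟩
      invFun := fun x => ⟨(x.1, g - x.1), ⟨by ring, (key x.1).mpr x.2⟩⟩
      left_inv := fun p => by
        ext
        · rfl
        · exact (eq_sub_of_add_eq' p.2.1).symm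
      right_inv := fun x => rfl }
  let s : ZMod R → ZMod N := surjInv hsurj
  have hs : ∀ u, π (s u) = u := fun u => surjInv_eq hsurj u
  have e2 : {x : ZMod N // IsUnit (π x)} ≃ {u : ZMod R // IsUnit u} × π.ker :=
    { toFun := fun x => (⟨π x.1, x.2⟩, ⟨x.1 - s (π x.1), by
        rw [AddMonoidHom.mem_ker, map_sub, hs, sub_self]⟩)
      invFun := fun p => ⟨s p.1.1 + p.2.1, by
        rw [map_add, hs, AddMonoidHom.mem_ker.mp p.2.2, add_zero]; exact p.1.2⟩
      left_inv := fun x => by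
        ext
        simp
      right_inv := fun p => by
        have h0 : π p.2.1 = 0 := AddMonoidHom.mem_ker.mp p.2.2
        ext
        · simp [map_add, hs, h0]
        · simp [map_add, hs, h0] }
  rw [Nat.card_congr (e1.trans e2), Nat.card_prod, hcardker]
  have e3 : {u : ZMod R // IsUnit u} ≃ (ZMod R)ˣ :=
    { toFun := fun u => u.2.unit
      invFun := fun u => ⟨u, u.isUnit⟩
      left_inv := fun u => Subtype.ext u.2.unit_spec
      right_inv := fun u => Units.ext (Units.isUnit u).unit_spec }
  rw [Nat.card_congr e3, Nat.card_eq_fintype_card, ZMod.card_units_eq_totient, mul_comm]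
end

section
/- Fix positive integers p, n, divisors r ∣ d ∣ p, and let g = [u; a] ∈ G(p,p,n) be an element all of whose color values a_i lie in the subgroup dℤ/pℤ of ℤ/pℤ, whose underlying permutation u has k cycles. Let H denote the subgroup of G(p,p,n) consisting of all [v; b] with every b_i ∈ rℤ/pℤ and ∑_i b_i = 0 (the standard copy of G(p/r, p/r, n)). Then the number of distinct subgroups of the form δ⁻¹ H δ with δ = [id; c] a diagonal element of G(p,1,n) that contain g is exactly r^{k−1}. -/
section AuxCount

open GG AddSubgroup

variable {p n : ℕ}

private lemma mem_Gsub' {A B : AddSubgroup (ZMod p)} {x : GG p n} :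
    x ∈ Gsub p n A B ↔ (∀ i, x.col i ∈ A) ∧ wt x ∈ B := Iff.rfl

private lemma mem_K {R : AddSubgroup (ZMod p)} {c : Fin n → ZMod p} {x : GG p n} :
    x ∈ Subgroup.map (MulEquiv.toMonoidHom (MulAut.conj (GG.mk 1 c)⁻¹)) (Gsub p n R ⊥) ↔
      (∀ i, c (x.perm i) + x.col i - c i ∈ R) ∧ wt x = 0 := by
  rw [Subgroup.mem_map_equiv]
  have h1 : (MulAut.conj (GG.mk 1 c)⁻¹).symm x = (GG.mk 1 c) * x * (GG.mk 1 c)⁻¹ := by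
    rw [MulAut.conj_symm_apply, inv_inv]
  rw [h1, mem_Gsub', AddSubgroup.mem_bot]
  have hcol : ∀ i, ((GG.mk 1 c) * x * (GG.mk 1 c)⁻¹).col i = c (x.perm i) + x.col i - c i := by
    intro i
    simp [sub_eq_add_neg, mul_col, inv_col, add_assoc]
  have hwt : wt ((GG.mk 1 c) * x * (GG.mk 1 c)⁻¹) = wt x := by
    simp only [wt_mul, wt_inv]
    ring
  simp only [hcol, hwt]

private lemma mem_iff_mem_of_sub_mem {R : AddSubgroup (ZMod p)} {a b : ZMod p}
    (h : a - b ∈ R) : a ∈ R ↔ b ∈ R :=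
  ⟨fun ha => by simpa using R.sub_mem ha h, fun hb => by simpa using R.add_mem h hb⟩

private lemma K_eq_K {R : AddSubgroup (ZMod p)} {c c' : Fin n → ZMod p}
    (h : ∀ i j, (c i - c j) - (c' i - c' j) ∈ R) :
    Subgroup.map (MulEquiv.toMonoidHom (MulAut.conj (GG.mk 1 c)⁻¹)) (Gsub p n R ⊥) =
      Subgroup.map (MulEquiv.toMonoidHom (MulAut.conj (GG.mk 1 c')⁻¹)) (Gsub p n R ⊥) := by
  ext x
  rw [mem_K, mem_K]
  have key : ∀ i, (c (x.perm i) + x.col i - c i ∈ R ↔ c' (x.perm i) + x.col i - c' i ∈ R) := by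
    intro i
    apply mem_iff_mem_of_sub_mem
    have h2 := h (x.perm i) i
    have e : (c (x.perm i) + x.col i - c i) - (c' (x.perm i) + x.col i - c' i)
        = (c (x.perm i) - c i) - (c' (x.perm i) - c' i) := by ring
    rwa [e]
  simp only [key]

private lemma sub_mem_of_K_eq {R : AddSubgroup (ZMod p)} {c c' : Fin n → ZMod p}
    (hK : Subgroup.map (MulEquiv.toMonoidHom (MulAut.conj (GG.mk 1 c)⁻¹)) (Gsub p n R ⊥) =
      Subgroup.map (MulEquiv.toMonoidHom (MulAut.conj (GG.mk 1 c')⁻¹)) (Gsub p n R ⊥))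
    {i j : Fin n} (hij : i ≠ j) :
    (c i - c j) - (c' i - c' j) ∈ R := by
  classical
  set t := c i - c j with ht
  set b : Fin n → ZMod p :=
    fun l => (if l = i then t else 0) + (if l = j then -t else 0) with hb
  have hbi : b i = t := by simp [hb, hij]
  have hbj : b j = -t := by simp [hb, hij.symm]
  have hbo : ∀ l, l ≠ i → l ≠ j → b l = 0 := fun l h1 h2 => by simp [hb, h1, h2]
  have hx : (GG.mk (Equiv.swap i j) b) ∈
      Subgroup.map (MulEquiv.toMonoidHom (MulAut.conj (GG.mk 1 c)⁻¹)) (Gsub p n R ⊥) := by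
    rw [mem_K]
    constructor
    · intro l
      show c (Equiv.swap i j l) + b l - c l ∈ R
      rcases eq_or_ne l i with rfl | h1
      · rw [Equiv.swap_apply_left, hbi, ht]
        have e : c j + (c l - c j) - c l = 0 := by ring
        rw [e]; exact R.zero_mem
      rcases eq_or_ne l j with rfl | h2
      · rw [Equiv.swap_apply_right, hbj, ht]
        have e : c i + -(c i - c l) - c l = 0 := by ring
        rw [e]; exact R.zero_mem
      · rw [Equiv.swap_apply_of_ne_of_ne h1 h2, hbo l h1 h2]
        have e : c l + 0 - c l = 0 := by ring
        rw [e]; exact R.zero_mem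
    · show ∑ l, b l = 0
      simp only [hb, Finset.sum_add_distrib, Finset.sum_ite_eq', Finset.mem_univ, if_true]
      exact add_neg_cancel t
  rw [hK, mem_K] at hx
  have h2 := hx.1 i
  have e : (GG.mk (Equiv.swap i j) b).perm i = j := Equiv.swap_apply_left i j
  rw [e] at h2
  have h3 : c' j + b i - c' i ∈ R := h2
  rw [hbi, ht] at h3
  have e2 : c' j + (c i - c j) - c' i = (c i - c j) - (c' i - c' j) := by ring
  rwa [e2] at h3

private lemma cycle_const {R : AddSubgroup (ZMod p)} {c : Fin n → ZMod p}
    {u : Equiv.Perm (Fin n)} (h1 : ∀ i, c (u i) - c i ∈ R) {x y : Fin n}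
    (hxy : u.SameCycle x y) : c y - c x ∈ R := by
  obtain ⟨z, rfl⟩ := hxy
  induction z using Int.induction_on with
  | zero => simpa using R.zero_mem
  | succ m ih =>
      have e : (u ^ ((m : ℤ) + 1)) x = u ((u ^ (m : ℤ)) x) := by
        rw [add_comm, zpow_add, zpow_one, Equiv.Perm.mul_apply]
      rw [e]
      have h2 := R.add_mem (h1 ((u ^ (m : ℤ)) x)) ih
      have e2 : c (u ((u ^ (m : ℤ)) x)) - c x
          = (c (u ((u ^ (m : ℤ)) x)) - c ((u ^ (m : ℤ)) x)) + (c ((u ^ (m : ℤ)) x) - c x) := by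
        ring
      rwa [e2]
  | pred m ih =>
      set s := (u ^ (-(m : ℤ) - 1)) x with hs
      have e : (u ^ (-(m : ℤ))) x = u s := by
        have e0 : (-(m : ℤ)) = 1 + (-(m : ℤ) - 1) := by ring
        rw [e0, zpow_add, zpow_one, Equiv.Perm.mul_apply]
      have h2 : c (u s) - c s ∈ R := h1 s
      have h3 := R.sub_mem ih h2
      have e4 : c s - c x = (c ((u ^ (-(m : ℤ))) x) - c x) - (c (u s) - c s) := by
        rw [e]; ring
      rwa [e4]

end AuxCount

/-- Let `r ∣ d ∣ p`, let `g = [u; a] ∈ G(p,p,n)` have all color values in `dℤ/pℤ` and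
`k` cycles, and let `H` be the standard copy of `G(p/r, p/r, n)` inside `G(p,p,n)`.
Then exactly `r^{k−1}` of the subgroups `δ⁻¹ H δ`, for `δ = [id; c]` a diagonal element
of `G(p,1,n)`, contain `g`. -/
theorem count_diagonal_conjugates (p n k r d : ℕ) (hp : 0 < p) (hn : 0 < n) (hk : 0 < k)
    (hrd : r ∣ d) (hdp : d ∣ p) (g : GG p n)
    (hg : g ∈ GG.Gsub p n (AddSubgroup.zmultiples ((d : ZMod p))) ⊥)
    (rep : Fin k → Fin n)
    (hrep : ∀ x : Fin n, ∃! i : Fin k, g.perm.SameCycle (rep i) x) :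
    Nat.card {K : Subgroup (GG p n) //
        g ∈ K ∧ ∃ c : Fin n → ZMod p,
          K = Subgroup.map (MulEquiv.toMonoidHom (MulAut.conj (GG.mk 1 c)⁻¹))
            (GG.Gsub p n (AddSubgroup.zmultiples ((r : ZMod p))) ⊥)} = r ^ (k - 1) := by
    classical
  haveI : NeZero p := ⟨hp.ne'⟩
  have hrp : r ∣ p := hrd.trans hdp
  set R : AddSubgroup (ZMod p) := AddSubgroup.zmultiples ((r : ZMod p)) with hRdef
  have hdR : (d : ZMod p) ∈ R := by
    obtain ⟨m, hm⟩ := hrd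
    refine AddSubgroup.mem_zmultiples_iff.mpr ⟨(m : ℤ), ?_⟩
    rw [zsmul_eq_mul, hm]
    push_cast
    ring
  have hg' := mem_Gsub'.mp hg
  have haR : ∀ i, g.col i ∈ R := by
    intro i
    obtain ⟨z, hz⟩ := AddSubgroup.mem_zmultiples_iff.mp (hg'.1 i)
    exact hz ▸ AddSubgroup.zsmul_mem R hdR z
  have hwtg : GG.wt g = 0 := AddSubgroup.mem_bot.mp hg'.2
  set ι : Fin n → Fin k := fun x => (hrep x).choose with hιdef
  have hι : ∀ x, g.perm.SameCycle (rep (ι x)) x := fun x => (hrep x).choose_spec.1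
  have hι_uniq : ∀ x l, g.perm.SameCycle (rep l) x → l = ι x :=
    fun x l h => (hrep x).choose_spec.2 l h
  have hι_rep : ∀ l, ι (rep l) = l :=
    fun l => (hι_uniq (rep l) l (Equiv.Perm.SameCycle.refl _ _)).symm
  have hrep_inj : ∀ l l', rep l = rep l' → l = l' := by
    intro l l' h
    have h2 : ι (rep l) = ι (rep l') := by rw [h]
    rwa [hι_rep, hι_rep] at h2
  set i0 : Fin k := ⟨0, hk⟩ with hi0
  set cf : (Fin k → (ZMod p ⧸ R)) → (Fin n → ZMod p) := fun f x => (f (ι x)).out with hcfdef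
  have hmk_cf : ∀ (f : Fin k → (ZMod p ⧸ R)) (x : Fin n), ((cf f x : ZMod p) : (ZMod p ⧸ R)) = f (ι x) :=
    fun f x => QuotientAddGroup.out_eq' _
  have hconst : ∀ (c : Fin n → ZMod p), (∀ i, c (g.perm i) + g.col i - c i ∈ R) →
      ∀ x, c x - c (rep (ι x)) ∈ R := by
    intro c hc x
    have h1 : ∀ i, c (g.perm i) - c i ∈ R := by
      intro i
      have h2 := R.sub_mem (hc i) (haR i)
      have e : c (g.perm i) + g.col i - c i - g.col i = c (g.perm i) - c i := by ring
      rwa [e] at h2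
    exact cycle_const h1 (hι x)
  have hcf_cond : ∀ f : Fin k → (ZMod p ⧸ R), ∀ i, cf f (g.perm i) + g.col i - cf f i ∈ R := by
    intro f i
    have hsc : g.perm.SameCycle (rep (ι i)) (g.perm i) :=
      (hι i).trans ⟨1, by simp⟩
    have hi : ι i = ι (g.perm i) := hι_uniq (g.perm i) (ι i) hsc
    have hcc : cf f (g.perm i) = cf f i := by
      simp only [hcfdef]
      rw [← hi]
    rw [hcc]
    have e : cf f i + g.col i - cf f i = g.col i := by ring
    rw [e]
    exact haR i
  set T := {f : Fin k → (ZMod p ⧸ R) // f i0 = 0} with hTdef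
  set Ψ : T → {K : Subgroup (GG p n) //
      g ∈ K ∧ ∃ c : Fin n → ZMod p,
        K = Subgroup.map (MulEquiv.toMonoidHom (MulAut.conj (GG.mk 1 c)⁻¹))
          (GG.Gsub p n R ⊥)} :=
    fun f => ⟨Subgroup.map (MulEquiv.toMonoidHom (MulAut.conj (GG.mk 1 (cf f.1))⁻¹))
        (GG.Gsub p n R ⊥),
      mem_K.mpr ⟨hcf_cond f.1, hwtg⟩, cf f.1, rfl⟩ with hΨdef
  have hΨbij : Function.Bijective Ψ := by
    constructor
    · intro f f' h
      have hKeq : Subgroup.map (MulEquiv.toMonoidHom (MulAut.conj (GG.mk 1 (cf f.1))⁻¹))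
            (GG.Gsub p n R ⊥)
          = Subgroup.map (MulEquiv.toMonoidHom (MulAut.conj (GG.mk 1 (cf f'.1))⁻¹))
            (GG.Gsub p n R ⊥) := congrArg Subtype.val h
      apply Subtype.ext
      funext l
      rcases eq_or_ne l i0 with rfl | hl
      · rw [f.2, f'.2]
      · have hne : rep l ≠ rep i0 := fun e => hl (hrep_inj _ _ e)
        have h5 := sub_mem_of_K_eq hKeq hne
        have h6 : ((cf f.1 (rep l) - cf f.1 (rep i0) : ZMod p) : (ZMod p ⧸ R))
            = ((cf f'.1 (rep l) - cf f'.1 (rep i0) : ZMod p) : (ZMod p ⧸ R)) :=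
          (QuotientAddGroup.eq_iff_sub_mem).mpr h5
        rw [QuotientAddGroup.mk_sub, QuotientAddGroup.mk_sub, hmk_cf, hmk_cf, hmk_cf,
          hmk_cf, hι_rep, hι_rep, f.2, f'.2, sub_zero, sub_zero] at h6
        exact h6
    · rintro ⟨K0, hgK, c, rfl⟩
      have hc : ∀ i, c (g.perm i) + g.col i - c i ∈ R := (mem_K.mp hgK).1
      refine ⟨⟨fun l => ((c (rep l) : (ZMod p ⧸ R))) - ((c (rep i0) : (ZMod p ⧸ R))), by simp⟩, ?_⟩
      apply Subtype.ext
      show Subgroup.map (MulEquiv.toMonoidHom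
          (MulAut.conj (GG.mk 1 (cf fun l => ((c (rep l) : (ZMod p ⧸ R))) - ((c (rep i0) : (ZMod p ⧸ R)))))⁻¹))
          (GG.Gsub p n R ⊥)
        = Subgroup.map (MulEquiv.toMonoidHom (MulAut.conj (GG.mk 1 c)⁻¹)) (GG.Gsub p n R ⊥)
      apply K_eq_K
      intro i j
      rw [← QuotientAddGroup.eq_zero_iff]
      have hx : ∀ x, ((cf (fun l => ((c (rep l) : (ZMod p ⧸ R))) - ((c (rep i0) : (ZMod p ⧸ R)))) x : ZMod p) : (ZMod p ⧸ R))
          = (c x : (ZMod p ⧸ R)) - (c (rep i0) : (ZMod p ⧸ R)) := by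
        intro x
        refine (hmk_cf (fun l => ((c (rep l) : ZMod p ⧸ R)) - ((c (rep i0) : ZMod p ⧸ R))) x).trans ?_
        have h7 : (c x : (ZMod p ⧸ R)) = (c (rep (ι x)) : (ZMod p ⧸ R)) :=
          QuotientAddGroup.eq_iff_sub_mem.mpr (hconst c hc x)
        rw [h7]
      simp only [QuotientAddGroup.mk_sub, hx]
      abel
  rw [← Nat.card_eq_of_bijective Ψ hΨbij]
  have hQcard : Nat.card (ZMod p ⧸ R) = r := by
    have h1 : Nat.card R = p / r := by
      rw [hRdef, Nat.card_zmultiples, ZMod.addOrderOf_coe r hp.ne']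
      congr 1
      exact Nat.gcd_eq_right hrp
    have h2 := AddSubgroup.index_mul_card R
    rw [Nat.card_zmod, h1] at h2
    have h3 : Nat.card (ZMod p ⧸ R) = R.index := rfl
    rw [h3]
    have hr0 : 0 < r := Nat.pos_of_dvd_of_pos hrp hp
    have hpr_pos : 0 < p / r := Nat.div_pos (Nat.le_of_dvd hp hrp) hr0
    have h4 : p / (p / r) = R.index := Nat.div_eq_of_eq_mul_left hpr_pos h2.symm
    rw [← h4, Nat.div_div_self hrp hp.ne']
  have e : T ≃ ({l : Fin k // l ≠ i0} → (ZMod p ⧸ R)) :=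
    { toFun := fun f l => f.1 l.1
      invFun := fun h => ⟨fun l => if hl : l = i0 then 0 else h ⟨l, hl⟩, by simp⟩
      left_inv := by
        intro f
        apply Subtype.ext
        funext l
        by_cases hl : l = i0
        · subst hl; simp [f.2]
        · simp [hl]
      right_inv := by
        intro h
        funext l
        simp [l.2] }
  rw [Nat.card_congr e, Nat.card_fun, hQcard]
  congr 1
  rw [Nat.card_eq_fintype_card]
  have : Fintype.card {l : Fin k // l ≠ i0} = k - 1 := by
    rw [Fintype.card_subtype_compl, Fintype.card_subtype_eq, Fintype.card_fin]
  exact this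
end
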